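/- arXiv:2403.00598 — 3 statements merged into one kernel-verified Lean document; each statement's English description precedes it below -/
import Mathlib

section
/- Let I be an instance of 3DM with elements A ∪ B ∪ C = {e_1,…,e_{3n̂}} and family S = {S_1,…,S_{3n̂}}. Construct the capacitated house allocation instance I' as follows: for each element e_i there is a house e_i of capacity 1 and two applicants e_i^1, e_i^2 each with preference list consisting of e_i only; for each set S_j = {e_{j_1}, e_{j_2}, e_{j_3}} (j_1 < j_2 < j_3) there are houses t_j of capacity 4, p_j of capacity 1, q_j of capacity 1, and applicants s_j^1, s_j^2, s_j^3, s_j^4, a_j, p_j', q_j^1, q_j^2, q_j^3 with preference lists s_j^ℓ : e_{j_ℓ} ≻ p_j ≻ t_j for ℓ = 1,2,3; s_j^4 : e_{j_3} ≻ p_j ≻ t_j; a_j : q_j ≻ p_j ≻ x; q_j^1, q_j^2, q_j^3 : q_j only; p_j' : p_j only; and there is a collector house x of capacity 2n̂ − 2. Then there is a capacity increase vector r ≥ 0 with |r|_∞ ≤ 2 such that the instance with capacities q + r admits a perfect popular matching if and only if I admits an exact 3-cover. -/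
noncomputable section

open Finset

attribute [local instance] Classical.propDecidable

/-- `Better l x y` means the (optional) house `x` is strictly preferred to the (optional)
house `y` according to the strict preference list `l` (earlier in the list = more
preferred); being matched to any acceptable house is preferred to being unmatched. -/
def Better {H : Type*} (l : List H) : Option H → Option H → Prop
  | some h, some h' => h ∈ l ∧ l.idxOf h < l.idxOf h'
  | some h, none => h ∈ l
  | none, _ => False

/-- A capacitated house allocation instance: each applicant `a` has a strict preference
list `pref a` over her acceptable houses (most preferred first, acceptable = on the list),
and each house `h` has a capacity `cap h`. -/
structure HA (A H : Type*) where
  pref : A → List H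
  cap : H → ℕ

namespace HA

variable {A H : Type*} [Fintype A]

/-- A matching assigns to each applicant at most one acceptable house,
respecting the houses' capacities. -/
def IsMatching (I : HA A H) (M : A → Option H) : Prop :=
  (∀ a h, M a = some h → h ∈ I.pref a) ∧
  ∀ h, (univ.filter fun a => M a = some h).card ≤ I.cap h

/-- A matching is perfect if every applicant is matched. -/
def Perfect (M : A → Option H) : Prop := ∀ a, (M a).isSome

/-- `M'` dominates `M` if strictly more applicants prefer `M'` to `M` than
prefer `M` to `M'`. -/
def Dominates (I : HA A H) (M' M : A → Option H) : Prop :=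
  (univ.filter fun a => Better (I.pref a) (M a) (M' a)).card <
    (univ.filter fun a => Better (I.pref a) (M' a) (M a)).card

/-- A matching is popular if no matching dominates it. -/
def Popular (I : HA A H) (M : A → Option H) : Prop :=
  I.IsMatching M ∧ ∀ M', I.IsMatching M' → ¬ I.Dominates M' M

/-- `M'` Pareto-dominates `M` if every applicant is at least as well off in `M'`,
and some applicant is strictly better off. -/
def ParetoDominates (I : HA A H) (M' M : A → Option H) : Prop :=
  (∀ a, M' a = M a ∨ Better (I.pref a) (M' a) (M a)) ∧
  ∃ a, Better (I.pref a) (M' a) (M a)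

/-- A matching is Pareto-optimal if no matching Pareto-dominates it. -/
def ParetoOptimal (I : HA A H) (M : A → Option H) : Prop :=
  I.IsMatching M ∧ ∀ M', I.IsMatching M' → ¬ I.ParetoDominates M' M

/-- The cardinality of a matching: the number of matched applicants. -/
def size (M : A → Option H) : ℕ := (univ.filter fun a => (M a).isSome).card

/-- `f(a)`: the most preferred acceptable house of `a` (if any). -/
def fOpt (I : HA A H) (a : A) : Option H := (I.pref a).head?

/-- The admirers of a house `h`: the applicants whose most preferred house is `h`. -/
def admirers (I : HA A H) (h : H) : Finset A := univ.filter fun a => I.fOpt a = some h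

/-- `s(a)`: equals `f(a)` if `f(a)` has at most `cap (f a)` admirers; otherwise the
most preferred acceptable house of `a` having strictly fewer admirers than its
capacity; `none` if no such house exists. -/
def sOpt (I : HA A H) (a : A) : Option H :=
  match (I.pref a).head? with
  | none => none
  | some h =>
    if (I.admirers h).card ≤ I.cap h then some h
    else (I.pref a).find? fun h' => decide ((I.admirers h').card < I.cap h')

/-- `(a, h)` is an edge of the first/second-choice multigraph `G'`. -/
def InG' (I : HA A H) (a : A) (h : H) : Prop := I.fOpt a = some h ∨ I.sOpt a = some h

/-- The set of applicants matched to house `h` in `M`. -/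
def matchedTo (M : A → Option H) (h : H) : Finset A := univ.filter fun a => M a = some h

/-- An admissible matching: every edge lies in `G'`; every house having at least as many
admirers as its capacity is saturated by admirers only; and every house having at most
as many admirers as its capacity has all its admirers matched to it. -/
def Admissible (I : HA A H) (M : A → Option H) : Prop :=
  I.IsMatching M ∧
  (∀ a h, M a = some h → I.InG' a h) ∧
  (∀ h, I.cap h ≤ (I.admirers h).card →
      (matchedTo M h).card = I.cap h ∧ ∀ a ∈ matchedTo M h, I.fOpt a = some h) ∧
  (∀ h, (I.admirers h).card ≤ I.cap h → ∀ a ∈ I.admirers h, M a = some h)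

end HA

/-- An instance of the special variant of 3DM used in the reductions: the elements are
`e_0, …, e_{3n̂-1} : Fin (3 * n̂)`, where the first `n̂` elements form the class `A`, the
next `n̂` form `B` and the last `n̂` form `C`; `S j = (j₁, j₂, j₃)` (with `j₁ < j₂ < j₃`,
one element from each class) is the `j`-th 3-set of the family, and every element lies
in exactly 3 members of the family. -/
structure ThreeDMFlat (n : ℕ) where
  S : Fin (3 * n) → Fin (3 * n) × Fin (3 * n) × Fin (3 * n)
  partA : ∀ j, ((S j).1 : ℕ) < n
  partB : ∀ j, n ≤ ((S j).2.1 : ℕ) ∧ ((S j).2.1 : ℕ) < 2 * n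
  partC : ∀ j, 2 * n ≤ ((S j).2.2 : ℕ)
  reg : ∀ i, (Finset.univ.filter fun j =>
    (S j).1 = i ∨ (S j).2.1 = i ∨ (S j).2.2 = i).card = 3

/-- Membership of element `i` in the set `S j`. -/
def ThreeDMFlat.Mem {n : ℕ} (D : ThreeDMFlat n) (i j : Fin (3 * n)) : Prop :=
  (D.S j).1 = i ∨ (D.S j).2.1 = i ∨ (D.S j).2.2 = i

/-- `J` is an exact 3-cover: every element lies in exactly one member of `J`. -/
def ThreeDMFlat.ExactCover {n : ℕ} (D : ThreeDMFlat n) (J : Finset (Fin (3 * n))) : Prop :=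
  ∀ i, (J.filter fun j => D.Mem i j).card = 1

/-- Houses of the reduction for STATEMENT 15: element houses `e_i`, houses `t_j`, `p_j`,
`q_j` for each set `S_j`, and the collector house `x`. -/
abbrev House15 (n : ℕ) :=
  Fin (3 * n) ⊕ (Fin (3 * n) ⊕ (Fin (3 * n) ⊕ (Fin (3 * n) ⊕ Unit)))

/-- Applicants of the reduction for STATEMENT 15: `e_i^1, e_i^2`, `s_j^ℓ` (ℓ = 1,2,3,4),
`a_j`, `p_j'` and `q_j^1, q_j^2, q_j^3`. -/
abbrev Appl15 (n : ℕ) :=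
  (Fin (3 * n) × Fin 2) ⊕
    ((Fin (3 * n) × Fin 4) ⊕ (Fin (3 * n) ⊕ (Fin (3 * n) ⊕ (Fin (3 * n) × Fin 3))))

def he15 {n : ℕ} (i : Fin (3 * n)) : House15 n := Sum.inl i
def ht15 {n : ℕ} (j : Fin (3 * n)) : House15 n := Sum.inr (Sum.inl j)
def hp15 {n : ℕ} (j : Fin (3 * n)) : House15 n := Sum.inr (Sum.inr (Sum.inl j))
def hq15 {n : ℕ} (j : Fin (3 * n)) : House15 n := Sum.inr (Sum.inr (Sum.inr (Sum.inl j)))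
def hx15 {n : ℕ} : House15 n := Sum.inr (Sum.inr (Sum.inr (Sum.inr ())))

/-- The element of `S_j` acceptable to `s_j^ℓ`: `e_{j_1}, e_{j_2}, e_{j_3}` for
`ℓ = 0, 1, 2` and `e_{j_3}` for `ℓ = 3`. -/
def elem15 {n : ℕ} (D : ThreeDMFlat n) (j : Fin (3 * n)) (ℓ : Fin 4) : Fin (3 * n) :=
  if ℓ = 0 then (D.S j).1 else if ℓ = 1 then (D.S j).2.1 else (D.S j).2.2

/-- Initial capacities: `q[e_i] = 1`, `q[t_j] = 4`, `q[p_j] = 1`, `q[q_j] = 1`,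
`q[x] = 2n̂ - 2`. -/
def cap15 {n : ℕ} : House15 n → ℕ
  | Sum.inl _ => 1
  | Sum.inr (Sum.inl _) => 4
  | Sum.inr (Sum.inr (Sum.inl _)) => 1
  | Sum.inr (Sum.inr (Sum.inr (Sum.inl _))) => 1
  | Sum.inr (Sum.inr (Sum.inr (Sum.inr _))) => 2 * n - 2

/-- The instance `I'` of STATEMENT 15 (with capacity vector `c`):
`s_j^ℓ : e_{j_ℓ} ≻ p_j ≻ t_j` (ℓ = 1,2,3), `s_j^4 : e_{j_3} ≻ p_j ≻ t_j`;
`a_j : q_j ≻ p_j ≻ x`; `q_j^1, q_j^2, q_j^3 : q_j`; `p_j' : p_j`; `e_i^1, e_i^2 : e_i`. -/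
def inst15 {n : ℕ} (D : ThreeDMFlat n) (c : House15 n → ℕ) : HA (Appl15 n) (House15 n) where
  pref := fun a =>
    match a with
    | Sum.inl (i, _) => [he15 i]
    | Sum.inr (Sum.inl (j, ℓ)) => [he15 (elem15 D j ℓ), hp15 j, ht15 j]
    | Sum.inr (Sum.inr (Sum.inl j)) => [hq15 j, hp15 j, hx15]
    | Sum.inr (Sum.inr (Sum.inr (Sum.inl j))) => [hp15 j]
    | Sum.inr (Sum.inr (Sum.inr (Sum.inr (j, _)))) => [hq15 j]
  cap := c

lemma popular_of_full_lovers {A H : Type*} [Fintype A] [Fintype H] (I : HA A H)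
    (M : A → Option H) (hM : I.IsMatching M)
    (hfull : ∀ a h, Better (I.pref a) (some h) (M a) →
      (HA.matchedTo M h).card = I.cap h ∧ ∀ b ∈ HA.matchedTo M h, I.fOpt b = some h) :
    I.Popular M := by
  classical
  refine ⟨hM, fun M' hM' hdom => ?_⟩
  set Imp := univ.filter fun a => Better (I.pref a) (M' a) (M a) with hImpdef
  set Suf := univ.filter fun a => Better (I.pref a) (M a) (M' a) with hSufdef
  have key : Imp.card ≤ Suf.card := by
    have hDex : ∀ h : H, ∃ s : Finset A,
        (Imp ∩ HA.matchedTo M' h).card ≤ s.card ∧ s ⊆ Suf ∧ s ⊆ HA.matchedTo M h := by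
      intro h
      by_cases hne : (Imp ∩ HA.matchedTo M' h).Nonempty
      · obtain ⟨a, ha⟩ := hne
        have haI : a ∈ Imp := (mem_inter.1 ha).1
        have haM' : M' a = some h := (mem_filter.1 (mem_inter.1 ha).2).2
        have hb : Better (I.pref a) (some h) (M a) := by
          have := (mem_filter.1 haI).2; rwa [haM'] at this
        obtain ⟨hcard, hlov⟩ := hfull a h hb
        refine ⟨HA.matchedTo M h \ HA.matchedTo M' h, ?_, ?_, sdiff_subset⟩
        · have d1 : Disjoint (Imp ∩ HA.matchedTo M' h)
              (HA.matchedTo M h ∩ HA.matchedTo M' h) := by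
            rw [disjoint_left]
            intro b hb1 hb2
            have hbI : b ∈ Imp := (mem_inter.1 hb1).1
            have hbM : M b = some h := (mem_filter.1 (mem_inter.1 hb2).1).2
            have hbM' : M' b = some h := (mem_filter.1 (mem_inter.1 hb2).2).2
            have := (mem_filter.1 hbI).2
            rw [hbM, hbM'] at this
            exact lt_irrefl _ this.2
          have h1 : (Imp ∩ HA.matchedTo M' h).card + (HA.matchedTo M h ∩ HA.matchedTo M' h).card
              ≤ (HA.matchedTo M' h).card := by
            rw [← Finset.card_union_of_disjoint d1]
            exact card_le_card (union_subset inter_subset_right inter_subset_right)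
          have h2 : (HA.matchedTo M' h).card ≤ I.cap h := hM'.2 h
          have h3 : (HA.matchedTo M h \ HA.matchedTo M' h).card
              + (HA.matchedTo M h ∩ HA.matchedTo M' h).card = (HA.matchedTo M h).card :=
            Finset.card_sdiff_add_card_inter _ _
          omega
        · intro b hbmem
          obtain ⟨hbM, hbnM'⟩ := mem_sdiff.1 hbmem
          have hMb : M b = some h := (mem_filter.1 hbM).2
          have hfb : ((I.pref b).head? : Option H) = some h := hlov b hbM
          obtain ⟨t, hlist⟩ : ∃ t, I.pref b = h :: t := by
            cases hl : I.pref b with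
            | nil => rw [hl] at hfb; simp at hfb
            | cons x t => rw [hl] at hfb; simp at hfb; exact ⟨t, by rw [hfb]⟩
          have hM'b : M' b ≠ some h := fun hc => hbnM' (by simp [HA.matchedTo, hc])
          refine mem_filter.2 ⟨mem_univ _, ?_⟩
          rw [hMb, hlist]
          cases hM'bv : M' b with
          | none => exact List.mem_cons_self
          | some h' =>
            have hne' : h' ≠ h := fun he => hM'b (by rw [hM'bv, he])
            refine ⟨List.mem_cons_self, ?_⟩
            rw [List.idxOf_cons_self]
            have : (h :: t).idxOf h' = (t.idxOf h') + 1 := by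
              simp [List.idxOf_cons, hne'.symm]
            omega
      · rw [not_nonempty_iff_eq_empty] at hne
        exact ⟨∅, by simp [hne], empty_subset _, empty_subset _⟩
    choose D hD1 hD2 hD3 using hDex
    have step1 : Imp ⊆ univ.biUnion fun h => Imp ∩ HA.matchedTo M' h := by
      intro a ha
      have hb : Better (I.pref a) (M' a) (M a) := (mem_filter.1 ha).2
      cases hMa : M' a with
      | none => rw [hMa] at hb; exact absurd hb (by simp [Better])
      | some h =>
        exact mem_biUnion.2 ⟨h, mem_univ _, mem_inter.2 ⟨ha, by simp [HA.matchedTo, hMa]⟩⟩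
    have hdisj : ∀ h ∈ (univ : Finset H), ∀ h' ∈ (univ : Finset H), h ≠ h' →
        Disjoint (D h) (D h') := by
      intro h _ h' _ hne
      rw [disjoint_left]
      intro b hb hb'
      have h1 : M b = some h := (mem_filter.1 (hD3 h hb)).2
      have h2 : M b = some h' := (mem_filter.1 (hD3 h' hb')).2
      rw [h1] at h2
      exact hne (Option.some_injective _ h2)
    calc Imp.card ≤ (univ.biUnion fun h => Imp ∩ HA.matchedTo M' h).card := card_le_card step1
      _ ≤ ∑ h, (Imp ∩ HA.matchedTo M' h).card := card_biUnion_le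
      _ ≤ ∑ h, (D h).card := Finset.sum_le_sum fun h _ => hD1 h
      _ = (univ.biUnion D).card := (Finset.card_biUnion hdisj).symm
      _ ≤ Suf.card := card_le_card (biUnion_subset.2 fun h _ => hD2 h)
  exact absurd hdom (not_lt.2 key)
namespace Red15

variable {n : ℕ}

abbrev aE (i : Fin (3*n)) (k : Fin 2) : Appl15 n := Sum.inl (i, k)
abbrev aS (j : Fin (3*n)) (ℓ : Fin 4) : Appl15 n := Sum.inr (Sum.inl (j, ℓ))
abbrev aA (j : Fin (3*n)) : Appl15 n := Sum.inr (Sum.inr (Sum.inl j))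
abbrev aP (j : Fin (3*n)) : Appl15 n := Sum.inr (Sum.inr (Sum.inr (Sum.inl j)))
abbrev aQ (j : Fin (3*n)) (k : Fin 3) : Appl15 n := Sum.inr (Sum.inr (Sum.inr (Sum.inr (j, k))))

lemma elem0 (D : ThreeDMFlat n) (j) : elem15 D j 0 = (D.S j).1 := by simp [elem15]
lemma elem1 (D : ThreeDMFlat n) (j) : elem15 D j 1 = (D.S j).2.1 := by simp [elem15]
lemma elem2 (D : ThreeDMFlat n) (j) : elem15 D j 2 = (D.S j).2.2 := by simp [elem15]
lemma elem3 (D : ThreeDMFlat n) (j) : elem15 D j 3 = (D.S j).2.2 := by simp [elem15]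

lemma mem_of_elem (D : ThreeDMFlat n) (j : Fin (3*n)) (ℓ : Fin 4) (i : Fin (3*n))
    (h : elem15 D j ℓ = i) : D.Mem i j := by
  fin_cases ℓ <;> simp [elem15] at h <;> unfold ThreeDMFlat.Mem <;> tauto

lemma elems_distinct (D : ThreeDMFlat n) (j : Fin (3*n)) :
    (D.S j).1 ≠ (D.S j).2.1 ∧ (D.S j).1 ≠ (D.S j).2.2 ∧ (D.S j).2.1 ≠ (D.S j).2.2 := by
  have h1 := D.partA j
  have h2 := D.partB j
  have h3 := D.partC j
  refine ⟨?_, ?_, ?_⟩ <;> intro h <;> rw [Fin.ext_iff] at h <;> omega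

lemma filter_mem_eq (D : ThreeDMFlat n) (j : Fin (3*n)) :
    (univ.filter fun i => D.Mem i j) = {(D.S j).1, (D.S j).2.1, (D.S j).2.2} := by
  ext i
  simp [ThreeDMFlat.Mem, eq_comm]

lemma card_filter_mem (D : ThreeDMFlat n) (j : Fin (3*n)) :
    (univ.filter fun i => D.Mem i j).card = 3 := by
  rw [filter_mem_eq D j]
  obtain ⟨h1, h2, h3⟩ := elems_distinct D j
  rw [card_insert_of_notMem (by simp [h1, h2]), card_insert_of_notMem (by simp [h3]),
    card_singleton]

lemma double_count (D : ThreeDMFlat n) (P : Finset (Fin (3*n))) :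
    ∑ i, (P.filter fun j => D.Mem i j).card = 3 * P.card := by
  have : ∀ i, (P.filter fun j => D.Mem i j).card = ∑ j ∈ P, if D.Mem i j then 1 else 0 :=
    fun i => Finset.card_filter _ _
  simp only [this]
  rw [Finset.sum_comm]
  have : ∀ j ∈ P, ∑ i : Fin (3*n), (if D.Mem i j then 1 else 0) = 3 := by
    intro j _
    rw [← Finset.card_filter]
    exact card_filter_mem D j
  rw [Finset.sum_congr rfl this, Finset.sum_const, smul_eq_mul, mul_comm]

lemma card_of_exactCover (D : ThreeDMFlat n) (J : Finset (Fin (3*n)))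
    (hJ : D.ExactCover J) : J.card = n := by
  have h1 := double_count D J
  have h2 : ∑ i, (J.filter fun j => D.Mem i j).card = ∑ i : Fin (3*n), 1 :=
    Finset.sum_congr rfl fun i _ => hJ i
  rw [h2] at h1
  simp at h1
  omega

end Red15
namespace Red15
variable {n : ℕ}

/-- Capacity increase vector for the backward direction. -/
def rJ (J : Finset (Fin (3*n))) : House15 n → ℕ
  | Sum.inl _ => 2
  | Sum.inr (Sum.inl _) => 0
  | Sum.inr (Sum.inr (Sum.inl j)) => if j ∈ J then 2 else 0
  | Sum.inr (Sum.inr (Sum.inr (Sum.inl _))) => 2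
  | Sum.inr (Sum.inr (Sum.inr (Sum.inr _))) => 2

/-- The matching for the backward direction. -/
def MJ (D : ThreeDMFlat n) (J : Finset (Fin (3*n))) : Appl15 n → Option (House15 n)
  | Sum.inl (i, _) => some (he15 i)
  | Sum.inr (Sum.inl (j, ℓ)) =>
      if j ∈ J then (if ℓ = 3 then some (hp15 j) else some (he15 (elem15 D j ℓ)))
      else some (ht15 j)
  | Sum.inr (Sum.inr (Sum.inl j)) => if j ∈ J then some (hp15 j) else some hx15
  | Sum.inr (Sum.inr (Sum.inr (Sum.inl j))) => some (hp15 j)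
  | Sum.inr (Sum.inr (Sum.inr (Sum.inr (j, _)))) => some (hq15 j)

lemma matchedTo_he (D : ThreeDMFlat n) (J : Finset (Fin (3*n))) (hJ : D.ExactCover J)
    (i : Fin (3*n)) :
    ∃ j₀ ℓ₀, j₀ ∈ J ∧ ℓ₀ ≠ (3 : Fin 4) ∧ elem15 D j₀ ℓ₀ = i ∧
      HA.matchedTo (MJ D J) (he15 i) = {aE i 0, aE i 1, aS j₀ ℓ₀} := by
  obtain ⟨j₀, hj₀⟩ := Finset.card_eq_one.1 (hJ i)
  have hj₀J : j₀ ∈ J ∧ D.Mem i j₀ := by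
    have : j₀ ∈ J.filter fun j => D.Mem i j := by rw [hj₀]; exact mem_singleton_self _
    exact ⟨(mem_filter.1 this).1, (mem_filter.1 this).2⟩
  have huniq : ∀ j', j' ∈ J → D.Mem i j' → j' = j₀ := by
    intro j' h1 h2
    have : j' ∈ J.filter fun j => D.Mem i j := mem_filter.2 ⟨h1, h2⟩
    rw [hj₀] at this; exact mem_singleton.1 this
  obtain ⟨ℓ₀, hℓ₀ne, hℓ₀⟩ : ∃ ℓ₀ : Fin 4, ℓ₀ ≠ 3 ∧ elem15 D j₀ ℓ₀ = i := by
    rcases hj₀J.2 with h | h | h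
    exacts [⟨0, by decide, by rw [elem0, h]⟩, ⟨1, by decide, by rw [elem1, h]⟩,
      ⟨2, by decide, by rw [elem2, h]⟩]
  refine ⟨j₀, ℓ₀, hj₀J.1, hℓ₀ne, hℓ₀, ?_⟩
  ext b
  simp only [HA.matchedTo, mem_filter, mem_univ, true_and, mem_insert, mem_singleton]
  rcases b with ⟨i', k⟩ | ⟨⟨j', ℓ'⟩ | j' | j' | ⟨j', k⟩⟩
  · constructor
    · intro h
      have hi : i' = i := by simpa [MJ, he15] using h
      subst hi
      have hk : k = 0 ∨ k = 1 := by fin_cases k <;> simp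
      rcases hk with rfl | rfl
      · exact Or.inl rfl
      · exact Or.inr (Or.inl rfl)
    · rintro (h | h | h)
      · obtain ⟨h1, h2⟩ : i' = i ∧ k = 0 := by simpa [aE] using h
        subst h1; simp [MJ]
      · obtain ⟨h1, h2⟩ : i' = i ∧ k = 1 := by simpa [aE] using h
        subst h1; simp [MJ]
      · simp [aS] at h
  · constructor
    · intro h
      simp only [MJ] at h
      split at h
      · split at h
        · simp [hp15, he15] at h
        · simp only [he15, Sum.inl.injEq, Option.some.injEq] at h
          have hmem : D.Mem i j' := mem_of_elem D j' ℓ' i h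
          have hj' : j' = j₀ := huniq j' (by assumption) hmem
          subst hj'
          have hℓ' : ℓ' = ℓ₀ := by
            have hd := elems_distinct D j'
            rw [← hℓ₀] at h
            fin_cases ℓ' <;> fin_cases ℓ₀ <;>
              simp_all [elem0, elem1, elem2, elem3, elem15] <;> tauto
          subst hℓ'
          tauto
      · simp [ht15, he15] at h
    · intro h
      rcases h with h | h | h
      · simp [aE, aS] at h
      · simp [aE, aS] at h
      · simp only [aS, Sum.inr.injEq, Sum.inl.injEq, Prod.mk.injEq] at h
        obtain ⟨h1, h2⟩ := h
        subst h1; subst h2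
        simp [MJ, hj₀J.1, hℓ₀ne, hℓ₀]
  · constructor
    · intro h
      simp only [MJ] at h
      split at h <;> simp [hp15, hx15, he15] at h
    · intro h; simp [aE, aS, aA] at h
  · constructor
    · intro h; simp [MJ, hp15, he15] at h
    · intro h; simp [aE, aS, aP] at h
  · constructor
    · intro h; simp [MJ, hq15, he15] at h
    · intro h; simp [aE, aS, aQ] at h

end Red15
namespace Red15
variable {n : ℕ}

lemma matchedTo_hq (D : ThreeDMFlat n) (J : Finset (Fin (3*n))) (j : Fin (3*n)) :
    HA.matchedTo (MJ D J) (hq15 j) = {aQ j 0, aQ j 1, aQ j 2} := by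
  ext b
  simp only [HA.matchedTo, mem_filter, mem_univ, true_and, mem_insert, mem_singleton]
  rcases b with ⟨i', k⟩ | ⟨⟨j', ℓ'⟩ | j' | j' | ⟨j', k⟩⟩
  · constructor
    · intro h; simp [MJ, he15, hq15] at h
    · rintro (h | h | h) <;> simp [aQ] at h
  · constructor
    · intro h
      simp only [MJ] at h
      split at h
      · split at h <;> simp [hp15, he15, hq15] at h
      · simp [ht15, hq15] at h
    · rintro (h | h | h) <;> simp [aS, aQ] at h
  · constructor
    · intro h
      simp only [MJ] at h
      split at h <;> simp [hp15, hx15, hq15] at h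
    · rintro (h | h | h) <;> simp [aA, aQ] at h
  · constructor
    · intro h; simp [MJ, hp15, hq15] at h
    · rintro (h | h | h) <;> simp [aP, aQ] at h
  · constructor
    · intro h
      have hj : j' = j := by simpa [MJ, hq15] using h
      subst hj
      have hk : k = 0 ∨ k = 1 ∨ k = 2 := by fin_cases k <;> simp
      rcases hk with rfl | rfl | rfl
      · exact Or.inl rfl
      · exact Or.inr (Or.inl rfl)
      · exact Or.inr (Or.inr rfl)
    · rintro (h | h | h) <;>
      · obtain ⟨h1, h2⟩ : j' = j ∧ _ := by simpa [aQ] using h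
        subst h1; simp [MJ]

lemma matchedTo_hp_not (D : ThreeDMFlat n) (J : Finset (Fin (3*n))) (j : Fin (3*n))
    (hj : j ∉ J) : HA.matchedTo (MJ D J) (hp15 j) = {aP j} := by
  ext b
  simp only [HA.matchedTo, mem_filter, mem_univ, true_and, mem_singleton]
  rcases b with ⟨i', k⟩ | ⟨⟨j', ℓ'⟩ | j' | j' | ⟨j', k⟩⟩
  · constructor
    · intro h; simp [MJ, he15, hp15] at h
    · intro h; simp [aP] at h
  · constructor
    · intro h
      simp only [MJ] at h
      split at h
      · rename_i hj'
        split at h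
        · have : j' = j := by simpa [hp15] using h
          subst this; exact absurd hj' hj
        · simp [he15, hp15] at h
      · simp [ht15, hp15] at h
    · intro h; simp [aS, aP] at h
  · constructor
    · intro h
      simp only [MJ] at h
      split at h
      · rename_i hj'
        have : j' = j := by simpa [hp15] using h
        subst this; exact absurd hj' hj
      · simp [hx15, hp15] at h
    · intro h; simp [aA, aP] at h
  · constructor
    · intro h
      have : j' = j := by simpa [MJ, hp15] using h
      subst this; rfl
    · intro h
      have : j' = j := by simpa [aP] using h
      subst this; simp [MJ]
  · constructor
    · intro h; simp [MJ, hq15, hp15] at h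
    · intro h; simp [aQ, aP] at h

lemma matchedTo_hp_mem (D : ThreeDMFlat n) (J : Finset (Fin (3*n))) (j : Fin (3*n))
    (hj : j ∈ J) : HA.matchedTo (MJ D J) (hp15 j) = {aS j 3, aA j, aP j} := by
  ext b
  simp only [HA.matchedTo, mem_filter, mem_univ, true_and, mem_insert, mem_singleton]
  rcases b with ⟨i', k⟩ | ⟨⟨j', ℓ'⟩ | j' | j' | ⟨j', k⟩⟩
  · constructor
    · intro h; simp [MJ, he15, hp15] at h
    · rintro (h | h | h) <;> simp [aS, aA, aP, aE] at h
  · constructor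
    · intro h
      simp only [MJ] at h
      split at h
      · split at h
        · rename_i hℓ'
          have : j' = j := by simpa [hp15] using h
          subst this; subst hℓ'
          exact Or.inl rfl
        · simp [he15, hp15] at h
      · simp [ht15, hp15] at h
    · rintro (h | h | h)
      · obtain ⟨h1, h2⟩ : j' = j ∧ ℓ' = 3 := by simpa [aS] using h
        subst h1; subst h2
        simp [MJ, hj]
      · simp [aS, aA] at h
      · simp [aS, aP] at h
  · constructor
    · intro h
      simp only [MJ] at h
      split at h
      · have : j' = j := by simpa [hp15] using h
        subst this
        exact Or.inr (Or.inl rfl)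
      · simp [hx15, hp15] at h
    · rintro (h | h | h)
      · simp [aS, aA] at h
      · have : j' = j := by simpa [aA] using h
        subst this; simp [MJ, hj]
      · simp [aA, aP] at h
  · constructor
    · intro h
      have : j' = j := by simpa [MJ, hp15] using h
      subst this
      exact Or.inr (Or.inr rfl)
    · rintro (h | h | h)
      · simp [aS, aP] at h
      · simp [aA, aP] at h
      · have : j' = j := by simpa [aP] using h
        subst this; simp [MJ]
  · constructor
    · intro h; simp [MJ, hq15, hp15] at h
    · rintro (h | h | h) <;> simp [aS, aA, aP, aQ] at h

lemma matchedTo_ht_subset (D : ThreeDMFlat n) (J : Finset (Fin (3*n))) (j : Fin (3*n)) :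
    HA.matchedTo (MJ D J) (ht15 j) ⊆ (univ : Finset (Fin 4)).image (aS j) := by
  intro b hb
  simp only [HA.matchedTo, mem_filter, mem_univ, true_and] at hb
  have h : MJ D J b = some (ht15 j) := hb
  rcases b with ⟨i', k⟩ | ⟨⟨j', ℓ'⟩ | j' | j' | ⟨j', k⟩⟩
  · simp [MJ, he15, ht15] at h
  · simp only [MJ] at h
    split at h
    · split at h <;> simp [hp15, he15, ht15] at h
    · have : j' = j := by simpa [ht15] using h
      subst this
      exact mem_image.2 ⟨ℓ', mem_univ _, rfl⟩
  · simp only [MJ] at h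
    split at h <;> simp [hp15, hx15, ht15] at h
  · simp [MJ, hp15, ht15] at h
  · simp [MJ, hq15, ht15] at h

lemma matchedTo_hx (D : ThreeDMFlat n) (J : Finset (Fin (3*n))) :
    HA.matchedTo (MJ D J) (hx15 : House15 n) = Jᶜ.image aA := by
  ext b
  simp only [HA.matchedTo, mem_filter, mem_univ, true_and]
  rcases b with ⟨i', k⟩ | ⟨⟨j', ℓ'⟩ | j' | j' | ⟨j', k⟩⟩
  · constructor
    · intro h; simp [MJ, he15, hx15] at h
    · intro h; simp [aA] at h
  · constructor
    · intro h
      simp only [MJ] at h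
      split at h
      · split at h <;> simp [hp15, he15, hx15] at h
      · simp [ht15, hx15] at h
    · intro h; simp [aS, aA] at h
  · constructor
    · intro h
      simp only [MJ] at h
      split at h
      · simp [hp15, hx15] at h
      · rename_i hj'
        exact mem_image.2 ⟨j', by simpa using hj', rfl⟩
    · intro h
      obtain ⟨j'', hj'', he⟩ := mem_image.1 h
      have hj'J : j' ∉ J := by
        have he2 : j'' = j' := by simpa [aA] using he
        subst he2; simpa using hj''
      simp [MJ, hj'J]
  · constructor
    · intro h; simp [MJ, hp15, hx15] at h
    · intro h
      obtain ⟨j'', _, he⟩ := mem_image.1 h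
      simp [aA, aP] at he
  · constructor
    · intro h; simp [MJ, hq15, hx15] at h
    · intro h
      obtain ⟨j'', _, he⟩ := mem_image.1 h
      simp [aA, aQ] at he

end Red15
namespace Red15
variable {n : ℕ}

lemma card_he (D : ThreeDMFlat n) (J : Finset (Fin (3*n))) (hJ : D.ExactCover J)
    (i : Fin (3*n)) : (HA.matchedTo (MJ D J) (he15 i)).card = 3 := by
  obtain ⟨j₀, ℓ₀, _, _, _, hset⟩ := matchedTo_he D J hJ i
  rw [hset]
  rw [card_insert_of_notMem (by simp), card_insert_of_notMem (by simp), card_singleton]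

lemma card_hq (D : ThreeDMFlat n) (J : Finset (Fin (3*n))) (j : Fin (3*n)) :
    (HA.matchedTo (MJ D J) (hq15 j)).card = 3 := by
  rw [matchedTo_hq]
  rw [card_insert_of_notMem (by simp), card_insert_of_notMem (by simp), card_singleton]

lemma perfect_MJ (D : ThreeDMFlat n) (J : Finset (Fin (3*n))) : HA.Perfect (MJ D J) := by
  intro a
  rcases a with ⟨i', k⟩ | ⟨⟨j', ℓ'⟩ | j' | j' | ⟨j', k⟩⟩ <;>
    simp [MJ, apply_ite Option.isSome]

lemma isMatching_MJ (D : ThreeDMFlat n) (J : Finset (Fin (3*n))) (hJ : D.ExactCover J) :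
    (inst15 D fun h => cap15 h + rJ J h).IsMatching (MJ D J) := by
  constructor
  · intro a h hah
    rcases a with ⟨i', k⟩ | ⟨⟨j', ℓ'⟩ | j' | j' | ⟨j', k⟩⟩ <;>
      simp only [MJ] at hah
    · simp [inst15, ← Option.some_injective _ hah]
    · split at hah
      · split at hah <;> simp [inst15, ← Option.some_injective _ hah]
      · simp [inst15, ← Option.some_injective _ hah]
    · split at hah <;> simp [inst15, ← Option.some_injective _ hah]
    · simp [inst15, ← Option.some_injective _ hah]
    · simp [inst15, ← Option.some_injective _ hah]
  · intro h
    suffices hs : (HA.matchedTo (MJ D J) h).card ≤ (inst15 D fun h => cap15 h + rJ J h).cap h by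
      exact hs
    rcases h with i | j | j | j | u
    · show (HA.matchedTo (MJ D J) (he15 i)).card ≤ (inst15 D fun h => cap15 h + rJ J h).cap (he15 i)
      rw [card_he D J hJ i]; simp [inst15, cap15, rJ, he15]
    · show (HA.matchedTo (MJ D J) (ht15 j)).card ≤ (inst15 D fun h => cap15 h + rJ J h).cap (ht15 j)
      calc (HA.matchedTo (MJ D J) (ht15 j)).card
          ≤ ((univ : Finset (Fin 4)).image (aS j)).card :=
            card_le_card (matchedTo_ht_subset D J j)
        _ ≤ 4 := le_trans card_image_le (by simp)
        _ ≤ _ := by simp [inst15, cap15, rJ, ht15]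
    · show (HA.matchedTo (MJ D J) (hp15 j)).card ≤ (inst15 D fun h => cap15 h + rJ J h).cap (hp15 j)
      by_cases hj : j ∈ J
      · rw [matchedTo_hp_mem D J j hj]
        have : ({aS j 3, aA j, aP j} : Finset (Appl15 n)).card = 3 := by
          rw [card_insert_of_notMem (by simp), card_insert_of_notMem (by simp),
            card_singleton]
        rw [this]
        simp [inst15, cap15, rJ, hp15, hj]
      · rw [matchedTo_hp_not D J j hj]
        simp [inst15, cap15, rJ, hp15, hj]
    · show (HA.matchedTo (MJ D J) (hq15 j)).card ≤ (inst15 D fun h => cap15 h + rJ J h).cap (hq15 j)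
      rw [matchedTo_hq D J j, card_insert_of_notMem (by simp),
        card_insert_of_notMem (by simp), card_singleton]
      simp [inst15, cap15, rJ, hq15]
    · rcases u with ⟨⟩
      show (HA.matchedTo (MJ D J) (hx15 : House15 n)).card ≤ (inst15 D fun h => cap15 h + rJ J h).cap hx15
      rw [matchedTo_hx D J]
      have h1 : (Jᶜ.image aA).card = Jᶜ.card := by
        apply card_image_of_injective
        intro a b hab
        simpa [aA] using hab
      rw [h1, card_compl, card_of_exactCover D J hJ]
      have : Fintype.card (Fin (3*n)) = 3*n := by simp
      rw [this]
      simp only [inst15, cap15, rJ, hx15]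
      omega

end Red15
namespace Red15
variable {n : ℕ}

lemma idx_cons_self {H : Type*} [DecidableEq H] (x : H) (l : List H) :
    (x :: l).idxOf x = 0 := List.idxOf_cons_self

lemma idx_cons_ne {H : Type*} [DecidableEq H] {x y : H} (h : x ≠ y) (l : List H) :
    (x :: l).idxOf y = l.idxOf y + 1 := by
  have hb : (x == y) = false := by simp [h]
  simp [List.idxOf_cons, hb]

lemma better3_cases {H : Type*} {x y z h : H} {w : Option H}
    (hxy : x ≠ y) (hxz : x ≠ z) (hyz : y ≠ z)
    (hb : Better [x, y, z] (some h) w) :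
    (h = x ∧ w ≠ some x) ∨ (h = y ∧ w ≠ some x ∧ w ≠ some y) ∨
      (h = z ∧ w ≠ some x ∧ w ≠ some y ∧ w ≠ some z) := by
  cases w with
  | none =>
    have hmem : h ∈ [x, y, z] := hb
    simp only [List.mem_cons, List.not_mem_nil, or_false] at hmem
    rcases hmem with rfl | rfl | rfl
    · exact Or.inl ⟨rfl, by simp⟩
    · exact Or.inr (Or.inl ⟨rfl, by simp, by simp⟩)
    · exact Or.inr (Or.inr ⟨rfl, by simp, by simp, by simp⟩)
  | some w' =>
    obtain ⟨hmem, hlt⟩ := hb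
    have ix : ([x, y, z] : List H).idxOf x = 0 := idx_cons_self x _
    have iy : ([x, y, z] : List H).idxOf y = 1 := by
      rw [idx_cons_ne hxy, idx_cons_self]
    have iz : ([x, y, z] : List H).idxOf z = 2 := by
      rw [idx_cons_ne hxz, idx_cons_ne hyz, idx_cons_self]
    simp only [List.mem_cons, List.not_mem_nil, or_false] at hmem
    rcases hmem with rfl | rfl | rfl
    · refine Or.inl ⟨rfl, fun hc => ?_⟩
      injection hc with hc; subst hc
      rw [ix] at hlt; omega
    · refine Or.inr (Or.inl ⟨rfl, fun hc => ?_, fun hc => ?_⟩) <;>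
        (injection hc with hc; subst hc)
      · rw [ix, iy] at hlt; omega
      · rw [iy] at hlt; omega
    · refine Or.inr (Or.inr ⟨rfl, fun hc => ?_, fun hc => ?_, fun hc => ?_⟩) <;>
        (injection hc with hc; subst hc)
      · rw [ix, iz] at hlt; omega
      · rw [iy, iz] at hlt; omega
      · rw [iz] at hlt; omega

lemma not_better1 {H : Type*} (x : H) {h : H}
    (hb : Better [x] (some h) (some x)) : False := by
  obtain ⟨hmem, hlt⟩ := hb
  simp only [List.mem_singleton] at hmem
  subst hmem
  exact lt_irrefl _ hlt

lemma full_lovers_he (D : ThreeDMFlat n) (J : Finset (Fin (3*n))) (hJ : D.ExactCover J)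
    (i : Fin (3*n)) :
    (HA.matchedTo (MJ D J) (he15 i)).card = (inst15 D fun h => cap15 h + rJ J h).cap (he15 i) ∧
      ∀ b ∈ HA.matchedTo (MJ D J) (he15 i),
        (inst15 D fun h => cap15 h + rJ J h).fOpt b = some (he15 i) := by
  obtain ⟨j₀, ℓ₀, hj₀, hℓ₀ne, hℓ₀, hset⟩ := matchedTo_he D J hJ i
  constructor
  · rw [card_he D J hJ i]; simp [inst15, cap15, rJ, he15]
  · intro b hb
    rw [hset] at hb
    simp only [mem_insert, mem_singleton] at hb
    rcases hb with rfl | rfl | rfl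
    · simp [HA.fOpt, inst15]
    · simp [HA.fOpt, inst15]
    · simp [HA.fOpt, inst15, hℓ₀]

lemma full_lovers_hq (D : ThreeDMFlat n) (J : Finset (Fin (3*n))) (j : Fin (3*n)) :
    (HA.matchedTo (MJ D J) (hq15 j)).card = (inst15 D fun h => cap15 h + rJ J h).cap (hq15 j) ∧
      ∀ b ∈ HA.matchedTo (MJ D J) (hq15 j),
        (inst15 D fun h => cap15 h + rJ J h).fOpt b = some (hq15 j) := by
  constructor
  · rw [card_hq D J j]; simp [inst15, cap15, rJ, hq15]
  · intro b hb
    rw [matchedTo_hq D J j] at hb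
    simp only [mem_insert, mem_singleton] at hb
    rcases hb with rfl | rfl | rfl <;> simp [HA.fOpt, inst15]

lemma full_lovers_hp_not (D : ThreeDMFlat n) (J : Finset (Fin (3*n))) (j : Fin (3*n))
    (hj : j ∉ J) :
    (HA.matchedTo (MJ D J) (hp15 j)).card = (inst15 D fun h => cap15 h + rJ J h).cap (hp15 j) ∧
      ∀ b ∈ HA.matchedTo (MJ D J) (hp15 j),
        (inst15 D fun h => cap15 h + rJ J h).fOpt b = some (hp15 j) := by
  constructor
  · rw [matchedTo_hp_not D J j hj, card_singleton]; simp [inst15, cap15, rJ, hp15, hj]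
  · intro b hb
    rw [matchedTo_hp_not D J j hj] at hb
    simp only [mem_singleton] at hb
    subst hb
    simp [HA.fOpt, inst15]

lemma backward15 (D : ThreeDMFlat n) (J : Finset (Fin (3*n))) (hJ : D.ExactCover J) :
    ∃ r : House15 n → ℕ, (∀ h, r h ≤ 2) ∧
      ∃ M, HA.Perfect M ∧ (inst15 D fun h => cap15 h + r h).Popular M := by
  refine ⟨rJ J, ?_, MJ D J, perfect_MJ D J, ?_⟩
  · intro h
    rcases h with i | j | j | j | u
    · simp [rJ]
    · simp [rJ]
    · simp only [rJ]; split <;> omega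
    · simp [rJ]
    · simp [rJ]
  · refine popular_of_full_lovers _ _ (isMatching_MJ D J hJ) ?_
    intro a h hb
    rcases a with ⟨i', k⟩ | ⟨⟨j', ℓ'⟩ | j' | j' | ⟨j', k⟩⟩
    · exfalso
      have hM : MJ D J (Sum.inl (i', k)) = some (he15 i') := rfl
      rw [hM] at hb
      exact not_better1 (he15 i') hb
    · have hl : (inst15 D fun h => cap15 h + rJ J h).pref (Sum.inr (Sum.inl (j', ℓ'))) =
          [he15 (elem15 D j' ℓ'), hp15 j', ht15 j'] := rfl
      rw [hl] at hb
      have hd1 : he15 (elem15 D j' ℓ') ≠ hp15 j' := by simp [he15, hp15]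
      have hd2 : he15 (elem15 D j' ℓ') ≠ ht15 j' := by simp [he15, ht15]
      have hd3 : hp15 j' ≠ ht15 j' := by simp [hp15, ht15]
      rcases better3_cases hd1 hd2 hd3 hb with ⟨rfl, hw1⟩ | ⟨rfl, hw1, hw2⟩ |
        ⟨rfl, hw1, hw2, hw3⟩
      · exact full_lovers_he D J hJ _
      · by_cases hj' : j' ∈ J
        · exfalso
          by_cases hℓ3 : ℓ' = 3
          · exact hw2 (by simp [MJ, hj', hℓ3])
          · exact hw1 (by simp [MJ, hj', hℓ3])
        · exact full_lovers_hp_not D J j' hj'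
      · exfalso
        by_cases hj' : j' ∈ J
        · by_cases hℓ3 : ℓ' = 3
          · exact hw2 (by simp [MJ, hj', hℓ3])
          · exact hw1 (by simp [MJ, hj', hℓ3])
        · exact hw3 (by simp [MJ, hj'])
    · have hl : (inst15 D fun h => cap15 h + rJ J h).pref (Sum.inr (Sum.inr (Sum.inl j'))) =
          [hq15 j', hp15 j', hx15] := rfl
      rw [hl] at hb
      have hd1 : hq15 j' ≠ hp15 j' := by simp [hq15, hp15]
      have hd2 : hq15 j' ≠ (hx15 : House15 n) := by simp [hq15, hx15]
      have hd3 : hp15 j' ≠ (hx15 : House15 n) := by simp [hp15, hx15]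
      rcases better3_cases hd1 hd2 hd3 hb with ⟨rfl, hw1⟩ | ⟨rfl, hw1, hw2⟩ |
        ⟨rfl, hw1, hw2, hw3⟩
      · exact full_lovers_hq D J j'
      · by_cases hj' : j' ∈ J
        · exact absurd (by simp [MJ, hj'] : MJ D J (Sum.inr (Sum.inr (Sum.inl j'))) =
            some (hp15 j')) hw2
        · exact full_lovers_hp_not D J j' hj'
      · exfalso
        by_cases hj' : j' ∈ J
        · exact hw2 (by simp [MJ, hj'])
        · exact hw3 (by simp [MJ, hj'])
    · exfalso
      have hM : MJ D J (Sum.inr (Sum.inr (Sum.inr (Sum.inl j')))) = some (hp15 j') := rfl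
      rw [hM] at hb
      exact not_better1 (hp15 j') hb
    · exfalso
      have hM : MJ D J (Sum.inr (Sum.inr (Sum.inr (Sum.inr (j', k))))) = some (hq15 j') := rfl
      rw [hM] at hb
      exact not_better1 (hq15 j') hb

end Red15
namespace Red15
variable {n : ℕ}

lemma not_better_self {H : Type*} (l : List H) (o : Option H) : ¬ Better l o o := by
  cases o with
  | none => exact fun hb => hb
  | some h => exact fun hb => lt_irrefl _ hb.2

lemma four_le_card {α : Type*} [DecidableEq α] {s : Finset α} {a b c d : α}
    (hab : a ≠ b) (hac : a ≠ c) (had : a ≠ d) (hbc : b ≠ c) (hbd : b ≠ d) (hcd : c ≠ d)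
    (ha : a ∈ s) (hb : b ∈ s) (hc : c ∈ s) (hd : d ∈ s) : 4 ≤ s.card := by
  have hsub : ({a, b, c, d} : Finset α) ⊆ s := by
    simp [Finset.insert_subset_iff, ha, hb, hc, hd]
  have hcard : ({a, b, c, d} : Finset α).card = 4 := by
    rw [card_insert_of_notMem (by simp [hab, hac, had]),
      card_insert_of_notMem (by simp [hbc, hbd]),
      card_insert_of_notMem (by simp [hcd]), card_singleton]
  calc 4 = ({a, b, c, d} : Finset α).card := hcard.symm
    _ ≤ s.card := card_le_card hsub

lemma mem_matchedTo {A H : Type*} [Fintype A] {M : A → Option H} {h : H} {b : A} :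
    b ∈ HA.matchedTo M h ↔ M b = some h := by
  simp [HA.matchedTo]

section Forward
variable (D : ThreeDMFlat n) (r : House15 n → ℕ) (M : Appl15 n → Option (House15 n))

lemma fwd_cap (hMatch : (inst15 D fun h => cap15 h + r h).IsMatching M) :
    ∀ h, (HA.matchedTo M h).card ≤ cap15 h + r h := fun h => hMatch.2 h

lemma fwd_aE (hMatch : (inst15 D fun h => cap15 h + r h).IsMatching M) (hPerf : HA.Perfect M) :
    ∀ i k, M (aE i k) = some (he15 i) := by
  intro i k
  obtain ⟨h, hh⟩ := Option.isSome_iff_exists.1 (hPerf (aE i k))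
  have hmem : h ∈ [he15 i] := hMatch.1 _ _ hh
  simp only [List.mem_singleton] at hmem
  rw [hh, hmem]

lemma fwd_aQ (hMatch : (inst15 D fun h => cap15 h + r h).IsMatching M) (hPerf : HA.Perfect M) :
    ∀ j k, M (aQ j k) = some (hq15 j) := by
  intro j k
  obtain ⟨h, hh⟩ := Option.isSome_iff_exists.1 (hPerf (aQ j k))
  have hmem : h ∈ [hq15 j] := hMatch.1 _ _ hh
  simp only [List.mem_singleton] at hmem
  rw [hh, hmem]

lemma fwd_aP (hMatch : (inst15 D fun h => cap15 h + r h).IsMatching M) (hPerf : HA.Perfect M) :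
    ∀ j, M (aP j) = some (hp15 j) := by
  intro j
  obtain ⟨h, hh⟩ := Option.isSome_iff_exists.1 (hPerf (aP j))
  have hmem : h ∈ [hp15 j] := hMatch.1 _ _ hh
  simp only [List.mem_singleton] at hmem
  rw [hh, hmem]

lemma fwd_aS (hMatch : (inst15 D fun h => cap15 h + r h).IsMatching M) (hPerf : HA.Perfect M) :
    ∀ j ℓ, M (aS j ℓ) = some (he15 (elem15 D j ℓ)) ∨ M (aS j ℓ) = some (hp15 j) ∨
      M (aS j ℓ) = some (ht15 j) := by
  intro j ℓ
  obtain ⟨h, hh⟩ := Option.isSome_iff_exists.1 (hPerf (aS j ℓ))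
  have hmem : h ∈ [he15 (elem15 D j ℓ), hp15 j, ht15 j] := hMatch.1 _ _ hh
  simp only [List.mem_cons, List.not_mem_nil, or_false] at hmem
  rcases hmem with rfl | rfl | rfl
  · exact Or.inl hh
  · exact Or.inr (Or.inl hh)
  · exact Or.inr (Or.inr hh)

lemma fwd_aA (hr : ∀ h, r h ≤ 2) (hMatch : (inst15 D fun h => cap15 h + r h).IsMatching M)
    (hPerf : HA.Perfect M) :
    ∀ j, M (aA j) = some (hp15 j) ∨ M (aA j) = some (hx15 : House15 n) := by
  intro j
  obtain ⟨h, hh⟩ := Option.isSome_iff_exists.1 (hPerf (aA j))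
  have hmem : h ∈ [hq15 j, hp15 j, hx15] := hMatch.1 _ _ hh
  simp only [List.mem_cons, List.not_mem_nil, or_false] at hmem
  rcases hmem with rfl | rfl | rfl
  · exfalso
    have h4 : 4 ≤ (HA.matchedTo M (hq15 j)).card := by
      refine four_le_card (a := aQ j 0) (b := aQ j 1) (c := aQ j 2) (d := aA j)
        (by simp) (by simp) (by simp) (by simp) (by simp) (by simp)
        (mem_matchedTo.2 (fwd_aQ D r M hMatch hPerf j 0))
        (mem_matchedTo.2 (fwd_aQ D r M hMatch hPerf j 1))
        (mem_matchedTo.2 (fwd_aQ D r M hMatch hPerf j 2))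
        (mem_matchedTo.2 hh)
    have hc : (HA.matchedTo M (hq15 j)).card ≤ 1 + r (hq15 j) := fwd_cap D r M hMatch (hq15 j)
    have hrr := hr (hq15 j)
    omega
  · exact Or.inl hh
  · exact Or.inr hh

end Forward
end Red15
namespace Red15
variable {n : ℕ}

lemma two_le_card {α : Type*} [DecidableEq α] {s : Finset α} {a b : α}
    (hab : a ≠ b) (ha : a ∈ s) (hb : b ∈ s) : 2 ≤ s.card := by
  have hsub : ({a, b} : Finset α) ⊆ s := by simp [Finset.insert_subset_iff, ha, hb]
  have hcard : ({a, b} : Finset α).card = 2 := by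
    rw [card_insert_of_notMem (by simp [hab]), card_singleton]
  calc 2 = ({a, b} : Finset α).card := hcard.symm
    _ ≤ s.card := card_le_card hsub

lemma better_xy {H : Type*} {x y z : H} (hxy : x ≠ y) :
    Better [x, y, z] (some x) (some y) := by
  refine ⟨by simp, ?_⟩
  rw [idx_cons_self, idx_cons_ne hxy]
  omega

lemma better_yz {H : Type*} {x y z : H} (hxy : x ≠ y) (hxz : x ≠ z) (hyz : y ≠ z) :
    Better [x, y, z] (some y) (some z) := by
  refine ⟨by simp, ?_⟩
  rw [idx_cons_ne hxy, idx_cons_self, idx_cons_ne hxz, idx_cons_ne hyz, idx_cons_self]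
  omega

lemma not_better_yx {H : Type*} {x y z : H} (hxy : x ≠ y) :
    ¬ Better [x, y, z] (some y) (some x) := by
  intro hb
  have hlt := hb.2
  rw [idx_cons_self, idx_cons_ne hxy] at hlt
  omega

lemma not_better_zy {H : Type*} {x y z : H} (hxy : x ≠ y) (hxz : x ≠ z) (hyz : y ≠ z) :
    ¬ Better [x, y, z] (some z) (some y) := by
  intro hb
  have hlt := hb.2
  rw [idx_cons_ne hxy, idx_cons_self, idx_cons_ne hxz, idx_cons_ne hyz, idx_cons_self] at hlt
  omega

section Swap
variable (D : ThreeDMFlat n) (r : House15 n → ℕ) (M : Appl15 n → Option (House15 n))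

/-- Popularity forces: if `a_j` is matched to `p_j`, no `s_j^ℓ` is matched to `t_j`. -/
lemma fwd_no_t (hr : ∀ h, r h ≤ 2)
    (hPop : (inst15 D fun h => cap15 h + r h).Popular M) (hPerf : HA.Perfect M) :
    ∀ j ℓ, M (aA j) = some (hp15 j) → M (aS j ℓ) ≠ some (ht15 j) := by
  obtain ⟨hMatch, hPopu⟩ := hPop
  intro j ℓ hA hS
  set M' : Appl15 n → Option (House15 n) := fun b =>
    if b = aS j ℓ then some (hp15 j) else if b = aA j then some (hq15 j)
    else if b = aQ j 0 then none else M b with hM'def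
  have hvS : M' (aS j ℓ) = some (hp15 j) := by simp [hM'def]
  have hvA : M' (aA j) = some (hq15 j) := by simp [hM'def]
  have hvQ : M' (aQ j 0) = none := by simp [hM'def]
  have hvO : ∀ b, b ≠ aS j ℓ → b ≠ aA j → b ≠ aQ j 0 → M' b = M b := by
    intro b h1 h2 h3; simp [hM'def, h1, h2, h3]
  have hQ0 : M (aQ j 0) = some (hq15 j) := fwd_aQ D r M hMatch hPerf j 0
  have hM'match : (inst15 D fun h => cap15 h + r h).IsMatching M' := by
    constructor
    · intro b h hbh
      by_cases h1 : b = aS j ℓ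
      · subst h1
        rw [hvS] at hbh
        obtain rfl : hp15 j = h := Option.some_injective _ hbh
        simp [inst15]
      · by_cases h2 : b = aA j
        · subst h2
          rw [hvA] at hbh
          obtain rfl : hq15 j = h := Option.some_injective _ hbh
          simp [inst15]
        · by_cases h3 : b = aQ j 0
          · subst h3; rw [hvQ] at hbh; exact absurd hbh (by simp)
          · rw [hvO b h1 h2 h3] at hbh
            exact hMatch.1 b h hbh
    · intro h
      suffices hs : (HA.matchedTo M' h).card ≤ cap15 h + r h by exact hs
      by_cases hp : h = hp15 j
      · subst hp
        have hset : HA.matchedTo M' (hp15 j) =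
            insert (aS j ℓ) ((HA.matchedTo M (hp15 j)).erase (aA j)) := by
          ext b
          rw [mem_matchedTo, mem_insert, mem_erase]
          by_cases h1 : b = aS j ℓ
          · subst h1; simp [hvS]
          · by_cases h2 : b = aA j
            · subst h2
              rw [hvA]
              simp [hq15, hp15]
            · by_cases h3 : b = aQ j 0
              · subst h3
                rw [hvQ]
                simp [mem_matchedTo, hQ0, hq15, hp15]
              · rw [hvO b h1 h2 h3]
                simp [mem_matchedTo, h1, h2]
        rw [hset]
        have hnotmem : aS j ℓ ∉ (HA.matchedTo M (hp15 j)).erase (aA j) := by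
          rw [mem_erase, mem_matchedTo]
          rintro ⟨-, hc⟩
          rw [hS] at hc
          simp [ht15, hp15] at hc
        rw [card_insert_of_notMem hnotmem,
          card_erase_of_mem (mem_matchedTo.2 hA)]
        have hle := fwd_cap D r M hMatch (hp15 j)
        have hpos : 0 < (HA.matchedTo M (hp15 j)).card :=
          card_pos.2 ⟨aA j, mem_matchedTo.2 hA⟩
        omega
      · by_cases hq : h = hq15 j
        · subst hq
          have hset : HA.matchedTo M' (hq15 j) =
              insert (aA j) ((HA.matchedTo M (hq15 j)).erase (aQ j 0)) := by
            ext b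
            rw [mem_matchedTo, mem_insert, mem_erase]
            by_cases h1 : b = aS j ℓ
            · subst h1
              rw [hvS]
              simp [mem_matchedTo, hS, ht15, hq15, hp15]
            · by_cases h2 : b = aA j
              · subst h2; simp [hvA]
              · by_cases h3 : b = aQ j 0
                · subst h3
                  rw [hvQ]
                  simp
                · rw [hvO b h1 h2 h3]
                  simp [mem_matchedTo, h1, h2, h3]
          rw [hset]
          have hnotmem : aA j ∉ (HA.matchedTo M (hq15 j)).erase (aQ j 0) := by
            rw [mem_erase, mem_matchedTo]
            rintro ⟨-, hc⟩
            rw [hA] at hc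
            simp [hq15, hp15] at hc
          rw [card_insert_of_notMem hnotmem,
            card_erase_of_mem (mem_matchedTo.2 hQ0)]
          have hle := fwd_cap D r M hMatch (hq15 j)
          have hpos : 0 < (HA.matchedTo M (hq15 j)).card :=
            card_pos.2 ⟨aQ j 0, mem_matchedTo.2 hQ0⟩
          omega
        · have hsub : HA.matchedTo M' h ⊆ HA.matchedTo M h := by
            intro b hb
            rw [mem_matchedTo] at hb ⊢
            by_cases h1 : b = aS j ℓ
            · subst h1; rw [hvS] at hb
              exact absurd (Option.some_injective _ hb).symm hp
            · by_cases h2 : b = aA j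
              · subst h2; rw [hvA] at hb
                exact absurd (Option.some_injective _ hb).symm hq
              · by_cases h3 : b = aQ j 0
                · subst h3; rw [hvQ] at hb; exact absurd hb (by simp)
                · rwa [hvO b h1 h2 h3] at hb
          exact le_trans (card_le_card hsub) (fwd_cap D r M hMatch h)
  -- Now show M' dominates M
  have hdom : (inst15 D fun h => cap15 h + r h).Dominates M' M := by
    unfold HA.Dominates
    have hIp : (inst15 D fun h => cap15 h + r h).pref (aS j ℓ) =
        [he15 (elem15 D j ℓ), hp15 j, ht15 j] := rfl
    have hIa : (inst15 D fun h => cap15 h + r h).pref (aA j) = [hq15 j, hp15 j, hx15] := rfl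
    have hIq : (inst15 D fun h => cap15 h + r h).pref (aQ j 0) = [hq15 j] := rfl
    have hd1 : he15 (elem15 D j ℓ) ≠ hp15 j := by simp [he15, hp15]
    have hd2 : he15 (elem15 D j ℓ) ≠ ht15 j := by simp [he15, ht15]
    have hd3 : hp15 j ≠ ht15 j := by simp [hp15, ht15]
    have hd4 : hq15 j ≠ hp15 j := by simp [hq15, hp15]
    have hd5 : hq15 j ≠ (hx15 : House15 n) := by simp [hq15, hx15]
    have hd6 : hp15 j ≠ (hx15 : House15 n) := by simp [hp15, hx15]
    have hle1 : (univ.filter fun a =>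
        Better ((inst15 D fun h => cap15 h + r h).pref a) (M a) (M' a)).card ≤ 1 := by
      refine card_le_one.2 ?_
      have hkey : ∀ b, Better ((inst15 D fun h => cap15 h + r h).pref b) (M b) (M' b) →
          b = aQ j 0 := by
        intro b hbet
        by_cases h1 : b = aS j ℓ
        · exfalso
          subst h1
          rw [hvS, hS, hIp] at hbet
          exact not_better_zy hd1 hd2 hd3 hbet
        · by_cases h2 : b = aA j
          · exfalso
            subst h2
            rw [hvA, hA, hIa] at hbet
            exact not_better_yx hd4 hbet
          · by_cases h3 : b = aQ j 0
            · exact h3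
            · exfalso
              rw [hvO b h1 h2 h3] at hbet
              exact not_better_self _ _ hbet
      intro a ha b hb
      rw [hkey a (mem_filter.1 ha).2, hkey b (mem_filter.1 hb).2]
    have hge2 : 2 ≤ (univ.filter fun a =>
        Better ((inst15 D fun h => cap15 h + r h).pref a) (M' a) (M a)).card := by
      refine two_le_card (a := aS j ℓ) (b := aA j) (by simp) ?_ ?_
      · refine mem_filter.2 ⟨mem_univ _, ?_⟩
        rw [hvS, hS, hIp]
        exact better_yz hd1 hd2 hd3
      · refine mem_filter.2 ⟨mem_univ _, ?_⟩
        rw [hvA, hA, hIa]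
        exact better_xy hd4
    omega
  exact hPopu M' hM'match hdom

end Swap
end Red15
namespace Red15
variable {n : ℕ}

lemma forward15 (D : ThreeDMFlat n) (r : House15 n → ℕ) (hr : ∀ h, r h ≤ 2)
    (M : Appl15 n → Option (House15 n)) (hPerf : HA.Perfect M)
    (hPop : (inst15 D fun h => cap15 h + r h).Popular M) : ∃ J, D.ExactCover J := by
  have hMatch := hPop.1
  set P := univ.filter (fun j : Fin (3*n) => M (aA j) = some (hp15 j)) with hPdef
  have hPge : n ≤ P.card := by
    have hsub : (univ \ P).image aA ⊆ HA.matchedTo M hx15 := by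
      intro b hb
      obtain ⟨j, hj, rfl⟩ := mem_image.1 hb
      have hjP : M (aA j) ≠ some (hp15 j) := by
        intro hc
        exact (mem_sdiff.1 hj).2 (mem_filter.2 ⟨mem_univ _, hc⟩)
      rcases fwd_aA D r M hr hMatch hPerf j with h | h
      · exact absurd h hjP
      · exact mem_matchedTo.2 h
    have hcard1 : ((univ \ P).image aA).card = (univ \ P).card :=
      card_image_of_injective _ (fun a b hab => by simpa [aA] using hab)
    have hcard2 : (univ \ P).card = 3*n - P.card := by
      rw [card_sdiff_of_subset (subset_univ _)]
      simp
    have hcap : (HA.matchedTo M (hx15 : House15 n)).card ≤ (2*n - 2) + r hx15 :=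
      fwd_cap D r M hMatch hx15
    have hle := card_le_card hsub
    rw [hcard1, hcard2] at hle
    have hr2 := hr (hx15 : House15 n)
    have hP3 : P.card ≤ 3*n := by
      calc P.card ≤ Fintype.card (Fin (3*n)) := card_le_univ P
        _ = 3*n := by simp
    omega
  have hocc : ∀ j ∈ P, ∀ i, D.Mem i j → ∃ ℓ, M (aS j ℓ) = some (he15 i) := by
    intro j hjP i hmem
    have hA : M (aA j) = some (hp15 j) := (mem_filter.1 hjP).2
    have halt : ∀ ℓ, M (aS j ℓ) = some (he15 (elem15 D j ℓ)) ∨ M (aS j ℓ) = some (hp15 j) := by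
      intro ℓ
      rcases fwd_aS D r M hMatch hPerf j ℓ with h | h | h
      · exact Or.inl h
      · exact Or.inr h
      · exact absurd h (fwd_no_t D r M hr hPop hPerf j ℓ hA)
    have hponce : ∀ ℓ₁ ℓ₂ : Fin 4, ℓ₁ ≠ ℓ₂ → M (aS j ℓ₁) = some (hp15 j) →
        M (aS j ℓ₂) = some (hp15 j) → False := by
      intro ℓ₁ ℓ₂ hne h1 h2
      have h4 := four_le_card (a := aS j ℓ₁) (b := aS j ℓ₂) (c := aA j) (d := aP j)
        (by simp [hne]) (by simp) (by simp) (by simp) (by simp) (by simp)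
        (mem_matchedTo.2 h1) (mem_matchedTo.2 h2) (mem_matchedTo.2 hA)
        (mem_matchedTo.2 (fwd_aP D r M hMatch hPerf j))
      have hc : (HA.matchedTo M (hp15 j)).card ≤ 1 + r (hp15 j) :=
        fwd_cap D r M hMatch (hp15 j)
      have := hr (hp15 j)
      omega
    have h23 : ¬(M (aS j 2) = some (he15 ((D.S j).2.2)) ∧
        M (aS j 3) = some (he15 ((D.S j).2.2))) := by
      rintro ⟨h2e, h3e⟩
      have h4 := four_le_card (a := aE ((D.S j).2.2) 0) (b := aE ((D.S j).2.2) 1)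
        (c := aS j 2) (d := aS j 3)
        (by simp) (by simp) (by simp) (by simp) (by simp) (by simp)
        (mem_matchedTo.2 (fwd_aE D r M hMatch hPerf _ 0))
        (mem_matchedTo.2 (fwd_aE D r M hMatch hPerf _ 1))
        (mem_matchedTo.2 h2e) (mem_matchedTo.2 h3e)
      have hc : (HA.matchedTo M (he15 ((D.S j).2.2))).card ≤ 1 + r (he15 ((D.S j).2.2)) :=
        fwd_cap D r M hMatch (he15 ((D.S j).2.2))
      have := hr (he15 ((D.S j).2.2))
      omega
    have h2or3 : M (aS j 2) = some (he15 ((D.S j).2.2)) ∨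
        M (aS j 3) = some (he15 ((D.S j).2.2)) := by
      rcases halt 2 with h2 | h2
      · left; rwa [elem2] at h2
      · rcases halt 3 with h3 | h3
        · right; rwa [elem3] at h3
        · exact (hponce 2 3 (by decide) h2 h3).elim
    have hone : ∃ ℓp : Fin 4, (ℓp = 2 ∨ ℓp = 3) ∧ M (aS j ℓp) = some (hp15 j) := by
      rcases halt 2 with h2 | h2
      · rcases halt 3 with h3 | h3
        · rw [elem2] at h2; rw [elem3] at h3
          exact absurd ⟨h2, h3⟩ h23
        · exact ⟨3, Or.inr rfl, h3⟩
      · exact ⟨2, Or.inl rfl, h2⟩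
    obtain ⟨ℓp, hℓp, hpp⟩ := hone
    have h0 : M (aS j 0) = some (he15 ((D.S j).1)) := by
      rcases halt 0 with h | h
      · rwa [elem0] at h
      · exact (hponce 0 ℓp (by rcases hℓp with rfl | rfl <;> decide) h hpp).elim
    have h1 : M (aS j 1) = some (he15 ((D.S j).2.1)) := by
      rcases halt 1 with h | h
      · rwa [elem1] at h
      · exact (hponce 1 ℓp (by rcases hℓp with rfl | rfl <;> decide) h hpp).elim
    rcases hmem with hcase | hcase | hcase
    · exact ⟨0, by rw [h0, hcase]⟩
    · exact ⟨1, by rw [h1, hcase]⟩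
    · rcases h2or3 with h | h
      · exact ⟨2, by rw [h, hcase]⟩
      · exact ⟨3, by rw [h, hcase]⟩
  have hle1 : ∀ i, (P.filter fun j => D.Mem i j).card ≤ 1 := by
    intro i
    refine card_le_one.2 ?_
    intro j₁ hj₁ j₂ hj₂
    by_contra hne
    obtain ⟨ℓ₁, hℓ₁⟩ := hocc j₁ (filter_subset _ _ hj₁) i (mem_filter.1 hj₁).2
    obtain ⟨ℓ₂, hℓ₂⟩ := hocc j₂ (filter_subset _ _ hj₂) i (mem_filter.1 hj₂).2
    have h4 := four_le_card (a := aE i 0) (b := aE i 1) (c := aS j₁ ℓ₁) (d := aS j₂ ℓ₂)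
      (by simp) (by simp) (by simp) (by simp) (by simp) (by simp [hne])
      (mem_matchedTo.2 (fwd_aE D r M hMatch hPerf i 0))
      (mem_matchedTo.2 (fwd_aE D r M hMatch hPerf i 1))
      (mem_matchedTo.2 hℓ₁) (mem_matchedTo.2 hℓ₂)
    have hc : (HA.matchedTo M (he15 i)).card ≤ 1 + r (he15 i) := fwd_cap D r M hMatch (he15 i)
    have := hr (he15 i)
    omega
  refine ⟨P, fun i => ?_⟩
  by_contra hne1
  have hlt : (P.filter fun j => D.Mem i j).card < 1 := lt_of_le_of_ne (hle1 i) hne1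
  have hsum := double_count D P
  have hsumlt : ∑ i', (P.filter fun j => D.Mem i' j).card < ∑ _i' : Fin (3*n), 1 :=
    Finset.sum_lt_sum (fun i' _ => hle1 i') ⟨i, mem_univ _, hlt⟩
  rw [hsum] at hsumlt
  simp only [Finset.sum_const, smul_eq_mul, mul_one, card_univ, Fintype.card_fin] at hsumlt
  omega

end Red15
/-- there is a capacity increase vector `r ≥ 0` with `|r|_∞ ≤ 2` such that
the instance with capacities `q + r` admits a perfect popular matching iff the 3DM
instance admits an exact 3-cover. -/
theorem minMax_increase_iff_exactCover (n : ℕ) (D : ThreeDMFlat n) :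
    (∃ r : House15 n → ℕ, (∀ h, r h ≤ 2) ∧
        ∃ M, HA.Perfect M ∧ (inst15 D fun h => cap15 h + r h).Popular M) ↔
      (∃ J, D.ExactCover J) := by
  constructor
  · rintro ⟨r, hr, M, hPerf, hPop⟩
    exact Red15.forward15 D r hr M hPerf hPop
  · rintro ⟨J, hJ⟩
    exact Red15.backward15 D J hJ
end
end

section
/- Let (E, S) be a set cover instance with E = {e_1,…,e_n̂} and S = {S_1,…,S_m̂}, let N = n̂² m̂ and l_j = |S_j|, and let I' be the capacitated house allocation instance constructed as follows: for each set S_j there are houses s_j^1,…,s_j^{l_j} of capacity 1 with dummy applicants t_j^1,…,t_j^{l_j} (t_j^l accepts only s_j^l), a house w_j of capacity N, and applicants a_j^1,…,a_j^N with preference a_j^l : x^l ≻ s_j^1 ≻ ⋯ ≻ s_j^{l_j} ≻ w_j; for each element e_i there is an applicant e_i whose preference list is f followed by the houses s_j^l such that e_i ∈ S_j and e_i is the l-th smallest-index element of S_j, in increasing order; there is a house f of capacity 1 with a dummy applicant f' accepting only f; and there are houses x^1,…,x^N of capacity 1 with dummy applicants y^1,…,y^N (y^l accepts only x^l). If (E,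 S) admits a set cover using k sets, then there is a capacity increase vector r ≥ 0 with |r|_∞ ≤ k such that the instance with capacities q + r admits a perfect popular matching. -/
noncomputable section

open Finset

attribute [local instance] Classical.propDecidable

/-- Houses of the set-cover reduction: `s_j^l` (for `l < |S_j|`), `w_j`, `f`, and
`x^1, …, x^N` where `N = n̂² m̂`. -/
abbrev HouseSC (n m : ℕ) (S : Fin m → Finset (Fin n)) :=
  (Σ j : Fin m, Fin (S j).card) ⊕ (Fin m ⊕ (Unit ⊕ Fin (n ^ 2 * m)))

/-- Applicants of the set-cover reduction: the dummies `t_j^l`, the applicants `a_j^l`,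
the element applicants `e_i`, the dummy `f'`, and the dummies `y^l`. -/
abbrev ApplSC (n m : ℕ) (S : Fin m → Finset (Fin n)) :=
  (Σ j : Fin m, Fin (S j).card) ⊕
    ((Fin m × Fin (n ^ 2 * m)) ⊕ (Fin n ⊕ (Unit ⊕ Fin (n ^ 2 * m))))

def hsSC {n m : ℕ} {S : Fin m → Finset (Fin n)} (p : Σ j : Fin m, Fin (S j).card) :
    HouseSC n m S := Sum.inl p
def hwSC {n m : ℕ} {S : Fin m → Finset (Fin n)} (j : Fin m) : HouseSC n m S :=
  Sum.inr (Sum.inl j)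
def hfSC {n m : ℕ} {S : Fin m → Finset (Fin n)} : HouseSC n m S :=
  Sum.inr (Sum.inr (Sum.inl ()))
def hxSC {n m : ℕ} {S : Fin m → Finset (Fin n)} (l : Fin (n ^ 2 * m)) : HouseSC n m S :=
  Sum.inr (Sum.inr (Sum.inr l))

/-- Initial capacities: `q[s_j^l] = 1`, `q[w_j] = N`, `q[f] = 1`, `q[x^l] = 1`. -/
def capSC {n m : ℕ} {S : Fin m → Finset (Fin n)} : HouseSC n m S → ℕ
  | Sum.inl _ => 1
  | Sum.inr (Sum.inl _) => n ^ 2 * m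
  | Sum.inr (Sum.inr (Sum.inl _)) => 1
  | Sum.inr (Sum.inr (Sum.inr _)) => 1

/-- The set-cover reduction instance (with capacity vector `c`):
`t_j^l : s_j^l`; `a_j^l : x^l ≻ s_j^1 ≻ ⋯ ≻ s_j^{l_j} ≻ w_j`; `e_i : f` followed by the
houses `s_j^l` such that `e_i ∈ S_j` and `e_i` is the `l`-th smallest-index element of
`S_j`, in increasing order of `j`; `f' : f`; `y^l : x^l`. -/
def instSC (n m : ℕ) (S : Fin m → Finset (Fin n)) (c : HouseSC n m S → ℕ) :
    HA (ApplSC n m S) (HouseSC n m S) where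
  pref := fun a =>
    match a with
    | Sum.inl p => [hsSC p]
    | Sum.inr (Sum.inl (j, l)) =>
        hxSC l :: (((List.finRange (S j).card).map fun i => hsSC ⟨j, i⟩) ++ [hwSC j])
    | Sum.inr (Sum.inr (Sum.inl i)) =>
        hfSC :: (List.finRange m).filterMap fun j =>
          if h : i ∈ S j then
            some (hsSC ⟨j, ((S j).orderIsoOfFin rfl).symm ⟨i, h⟩⟩)
          else none
    | Sum.inr (Sum.inr (Sum.inr (Sum.inl _))) => [hfSC]
    | Sum.inr (Sum.inr (Sum.inr (Sum.inr l))) => [hxSC l]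
  cap := c


lemma find?_earlier {α : Type*} [DecidableEq α] {p : α → Bool} :
    ∀ {l : List α} {b x : α}, l.find? p = some b → x ∈ l →
      l.idxOf x < l.idxOf b → p x = false
  | c :: t, b, x, hf, hx, hlt => by
    by_cases hpc : p c = true
    · rw [List.find?_cons_of_pos hpc] at hf
      obtain rfl : c = b := by simpa using hf
      rw [List.idxOf_cons_self] at hlt
      omega
    · rw [List.find?_cons_of_neg hpc] at hf
      rcases eq_or_ne x c with rfl | hxc
      · simpa using hpc
      · have hbc : b ≠ c := by
          rintro rfl
          exact hpc (List.find?_some hf)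
        rw [List.idxOf_cons_ne _ (Ne.symm hxc), List.idxOf_cons_ne _ (Ne.symm hbc)] at hlt
        exact find?_earlier hf (by
          rcases List.mem_cons.mp hx with rfl | h
          · exact absurd rfl hxc
          · exact h) (Nat.succ_lt_succ_iff.mp hlt)


lemma find?_eq_some_unique {α : Type*} {p : α → Bool} :
    ∀ {l : List α} {b : α}, b ∈ l → p b = true → (∀ x ∈ l, p x = true → x = b) →
      l.find? p = some b
  | c :: t, b, hb, hpb, huniq => by
    by_cases hpc : p c = true
    · rw [List.find?_cons_of_pos hpc]
      exact congrArg some (huniq c (List.mem_cons_self) hpc)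
    · rw [List.find?_cons_of_neg hpc]
      have hbt : b ∈ t := by
        rcases List.mem_cons.mp hb with rfl | h
        · exact absurd hpb hpc
        · exact h
      exact find?_eq_some_unique hbt hpb fun x hx hpx => huniq x (List.mem_cons_of_mem _ hx) hpx

lemma popular_of_struct {A H : Type*} [Fintype A] [Fintype H] (I : HA A H)
    (M : A → Option H) (hM : I.IsMatching M) (hperf : HA.Perfect M)
    (hfs : ∀ a, M a = I.fOpt a ∨ M a = I.sOpt a)
    (hfull : ∀ h, I.cap h ≤ (I.admirers h).card →
      (HA.matchedTo M h).card = I.cap h ∧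
        ∀ a ∈ HA.matchedTo M h, I.fOpt a = some h) :
    I.Popular M := by
  refine ⟨hM, fun M' hM' hdom => ?_⟩
  set W := univ.filter fun a => Better (I.pref a) (M a) (M' a) with hWdef
  set B := univ.filter fun a => Better (I.pref a) (M' a) (M a) with hBdef
  suffices hle : B.card ≤ W.card by exact absurd hdom (not_lt.mpr hle)
  have hBsum : B.card = ∑ o : Option H, (B.filter fun a => M' a = o).card :=
    Finset.card_eq_sum_card_fiberwise (fun a _ => mem_univ _)
  have hWsum : W.card = ∑ o : Option H, (W.filter fun a => M a = o).card :=
    Finset.card_eq_sum_card_fiberwise (fun a _ => mem_univ _)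
  rw [hBsum, hWsum]
  refine Finset.sum_le_sum fun o _ => ?_
  match o with
  | none =>
    have : (B.filter fun a => M' a = none) = ∅ := by
      rw [Finset.eq_empty_iff_forall_notMem]
      intro a ha
      obtain ⟨haB, haN⟩ := Finset.mem_filter.mp ha
      have hab : Better (I.pref a) (M' a) (M a) := (Finset.mem_filter.mp haB).2
      rw [haN] at hab
      exact hab
    rw [this]
    simp
  | some h =>
    rcases (B.filter fun a => M' a = some h).eq_empty_or_nonempty with he | ⟨a0, ha0⟩
    · rw [he]; simp
    · obtain ⟨ha0B, ha0M'⟩ := Finset.mem_filter.mp ha0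
      have ha0b : Better (I.pref a0) (M' a0) (M a0) := (Finset.mem_filter.mp ha0B).2
      obtain ⟨h0, hh0⟩ := Option.isSome_iff_exists.mp (hperf a0)
      rw [ha0M', hh0] at ha0b
      obtain ⟨hmem, hidx⟩ := ha0b
      -- Step 1: h is oversubscribed by admirers
      have hcap : I.cap h ≤ (I.admirers h).card := by
        rcases hfs a0 with hf | hs
        · rw [hh0] at hf
          cases hp : I.pref a0 with
          | nil => rw [HA.fOpt, hp] at hf; simp at hf
          | cons c tl =>
            rw [HA.fOpt, hp] at hf
            obtain rfl : h0 = c := by simpa using hf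
            rw [hp, List.idxOf_cons_self] at hidx
            omega
        · rw [hh0] at hs
          rw [HA.sOpt] at hs
          split at hs
          · simp at hs
          · rename_i hd hhead
            by_cases hcle : (I.admirers hd).card ≤ I.cap hd
            · rw [if_pos hcle] at hs
              obtain rfl : h0 = hd := by simpa using hs
              cases hp : I.pref a0 with
              | nil => rw [hp] at hhead; simp at hhead
              | cons c tl =>
                rw [hp] at hhead
                obtain rfl : c = h0 := by simpa using hhead
                rw [hp, List.idxOf_cons_self] at hidx
                omega
            · rw [if_neg hcle] at hs
              have hph := find?_earlier hs.symm hmem hidx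
              simpa using hph
      obtain ⟨hTcard, hTadm⟩ := hfull h hcap
      set T := HA.matchedTo M h with hTdef
      set T1 := T.filter fun b => M' b = some h with hT1def
      have hT1T : T1 ⊆ T := Finset.filter_subset _ _
      have hdisj : Disjoint (B.filter fun a => M' a = some h) T1 := by
        rw [Finset.disjoint_left]
        intro x hx hx1
        obtain ⟨hxB, hxM'⟩ := Finset.mem_filter.mp hx
        have hxb : Better (I.pref x) (M' x) (M x) := (Finset.mem_filter.mp hxB).2
        have hxM : M x = some h := (Finset.mem_filter.mp (hT1T hx1)).2
        rw [hxM', hxM] at hxb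
        exact absurd hxb.2 (lt_irrefl _)
      have hcard2 : (B.filter fun a => M' a = some h).card + T1.card ≤ I.cap h := by
        calc (B.filter fun a => M' a = some h).card + T1.card
            = ((B.filter fun a => M' a = some h) ∪ T1).card :=
              (Finset.card_union_of_disjoint hdisj).symm
          _ ≤ (univ.filter fun a => M' a = some h).card := by
              refine Finset.card_le_card fun x hx => ?_
              rcases Finset.mem_union.mp hx with hx | hx
              · exact Finset.mem_filter.mpr ⟨mem_univ _, (Finset.mem_filter.mp hx).2⟩
              · exact Finset.mem_filter.mpr ⟨mem_univ _, (Finset.mem_filter.mp hx).2⟩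
          _ ≤ I.cap h := hM'.2 h
      have hsdcard : (T \ T1).card = I.cap h - T1.card := by
        rw [Finset.card_sdiff_of_subset hT1T, hTcard]
      have hsubW : T \ T1 ⊆ W.filter fun a => M a = some h := by
        intro b hb
        obtain ⟨hbT, hbT1⟩ := Finset.mem_sdiff.mp hb
        have hbM : M b = some h := (Finset.mem_filter.mp hbT).2
        have hbM' : M' b ≠ some h := fun hc => hbT1 (Finset.mem_filter.mpr ⟨hbT, hc⟩)
        have hbf : I.fOpt b = some h := hTadm b hbT
        cases hp : I.pref b with
        | nil => rw [HA.fOpt, hp] at hbf; simp at hbf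
        | cons c tl =>
          rw [HA.fOpt, hp] at hbf
          have hch : c = h := by simpa using hbf
          refine Finset.mem_filter.mpr ⟨Finset.mem_filter.mpr ⟨mem_univ _, ?_⟩, hbM⟩
          rw [hbM]
          have hhin : h ∈ I.pref b := by rw [hp, hch]; exact List.mem_cons_self
          cases hmo : M' b with
          | none => exact hhin
          | some h'' =>
            have hne : h ≠ h'' := fun e => hbM' (by rw [hmo, e])
            refine ⟨hhin, ?_⟩
            rw [hp, hch, List.idxOf_cons_self, List.idxOf_cons_ne _ hne]
            exact Nat.succ_pos _
      calc (B.filter fun a => M' a = some h).card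
          ≤ (T \ T1).card := by omega
        _ ≤ (W.filter fun a => M a = some h).card := Finset.card_le_card hsubW


section Concrete

variable {n m : ℕ} {S : Fin m → Finset (Fin n)}

/-- shorthand applicants -/
abbrev AtSC (p : Σ j : Fin m, Fin (S j).card) : ApplSC n m S := Sum.inl p
abbrev AaSC (j : Fin m) (l : Fin (n ^ 2 * m)) : ApplSC n m S := Sum.inr (Sum.inl (j, l))
abbrev AeSC (i : Fin n) : ApplSC n m S := Sum.inr (Sum.inr (Sum.inl i))
abbrev AfSC : ApplSC n m S := Sum.inr (Sum.inr (Sum.inr (Sum.inl ())))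
abbrev AySC (l : Fin (n ^ 2 * m)) : ApplSC n m S := Sum.inr (Sum.inr (Sum.inr (Sum.inr l)))

/-- the `l`-th smallest element of `S j` -/
def eltSC (j : Fin m) (l : Fin (S j).card) : Fin n := ((S j).orderIsoOfFin rfl l : Fin n)

lemma eltSC_mem (j : Fin m) (l : Fin (S j).card) : eltSC j l ∈ S j :=
  ((S j).orderIsoOfFin rfl l).2

variable (σ : Fin n → Fin m) (hσS : ∀ i, i ∈ S (σ i))

/-- the rank of `i` in `S (σ i)` -/
def rnkSC (i : Fin n) : Fin (S (σ i)).card :=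
  ((S (σ i)).orderIsoOfFin rfl).symm ⟨i, hσS i⟩

lemma eltSC_rnkSC (i : Fin n) : eltSC (σ i) (rnkSC σ hσS i) = i := by
  simp [eltSC, rnkSC]

lemma sigma_rnk_eq_iff (i : Fin n) (j : Fin m) (l : Fin (S j).card) :
    (⟨σ i, rnkSC σ hσS i⟩ : Σ j', Fin (S j').card) = ⟨j, l⟩ ↔ σ i = j ∧ i = eltSC j l := by
  constructor
  · intro h
    have h1 : σ i = j := congrArg Sigma.fst h
    have h2 := congrArg (fun q : (Σ j', Fin (S j').card) => eltSC q.1 q.2) h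
    simp only at h2
    rw [eltSC_rnkSC σ hσS i] at h2
    exact ⟨h1, h2⟩
  · rintro ⟨h1, h2⟩
    subst h1
    have : rnkSC σ hσS i = l := by
      rw [rnkSC, OrderIso.symm_apply_eq]
      exact Subtype.ext h2
    rw [this]

/-- capacity increase vector -/
def rSC (k : ℕ) : HouseSC n m S → ℕ
  | Sum.inl ⟨j, l⟩ => if σ (eltSC j l) = j then 1 else 0
  | Sum.inr (Sum.inl _) => 0
  | Sum.inr (Sum.inr (Sum.inl _)) => 0
  | Sum.inr (Sum.inr (Sum.inr _)) => k

/-- the matching -/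
def MSC (J : Finset (Fin m)) : ApplSC n m S → Option (HouseSC n m S)
  | Sum.inl p => some (hsSC p)
  | Sum.inr (Sum.inl (j, l)) => if j ∈ J then some (hxSC l) else some (hwSC j)
  | Sum.inr (Sum.inr (Sum.inl i)) => some (hsSC ⟨σ i, rnkSC σ hσS i⟩)
  | Sum.inr (Sum.inr (Sum.inr (Sum.inl _))) => some hfSC
  | Sum.inr (Sum.inr (Sum.inr (Sum.inr l))) => some (hxSC l)

end Concrete

section Admirers

variable {n m : ℕ} {S : Fin m → Finset (Fin n)} (c : HouseSC n m S → ℕ)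

lemma fOpt_At (p) : (instSC n m S c).fOpt (AtSC p) = some (hsSC p) := rfl
lemma fOpt_Aa (j l) : (instSC n m S c).fOpt (AaSC j l) = some (hxSC l) := rfl
lemma fOpt_Ae (i) : (instSC n m S c).fOpt (AeSC i) = some hfSC := rfl
lemma fOpt_Af : (instSC n m S c).fOpt (AfSC : ApplSC n m S) = some hfSC := rfl
lemma fOpt_Ay (l) : (instSC n m S c).fOpt (AySC l) = some (hxSC l) := rfl

lemma adm_hs (p) : (instSC n m S c).admirers (hsSC p) = {AtSC p} := by
  ext a
  simp only [HA.admirers, Finset.mem_filter, Finset.mem_univ, true_and, Finset.mem_singleton]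
  rcases a with q | (⟨j, l⟩ | (i | (u | l)))
  · simp [HA.fOpt, instSC, hsSC]
  · simp [HA.fOpt, instSC, hsSC, hxSC]
  · simp [HA.fOpt, instSC, hsSC, hfSC]
  · simp [HA.fOpt, instSC, hsSC, hfSC]
  · simp [HA.fOpt, instSC, hsSC, hxSC]

lemma adm_hw (j) : (instSC n m S c).admirers (hwSC j) = ∅ := by
  ext a
  simp only [HA.admirers, Finset.mem_filter, Finset.mem_univ, true_and,
    Finset.notMem_empty, iff_false]
  rcases a with q | (⟨j', l⟩ | (i | (u | l)))
  · simp [HA.fOpt, instSC, hsSC, hwSC]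
  · simp [HA.fOpt, instSC, hwSC, hxSC]
  · simp [HA.fOpt, instSC, hwSC, hfSC]
  · simp [HA.fOpt, instSC, hwSC, hfSC]
  · simp [HA.fOpt, instSC, hwSC, hxSC]

lemma adm_hf : (instSC n m S c).admirers hfSC =
    insert (AfSC : ApplSC n m S) (Finset.univ.image AeSC) := by
  ext a
  simp only [HA.admirers, Finset.mem_filter, Finset.mem_univ, true_and, Finset.mem_insert,
    Finset.mem_image]
  rcases a with q | (⟨j', l⟩ | (i | (u | l)))
  · simp [HA.fOpt, instSC, hsSC, hfSC]
  · simp [HA.fOpt, instSC, hfSC, hxSC]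
  · simp [HA.fOpt, instSC, hfSC]
  · simp [HA.fOpt, instSC, hfSC]
  · simp [HA.fOpt, instSC, hfSC, hxSC]

lemma adm_hx (l) : (instSC n m S c).admirers (hxSC l) =
    insert (AySC l) (Finset.univ.image fun j => AaSC j l) := by
  ext a
  simp only [HA.admirers, Finset.mem_filter, Finset.mem_univ, true_and, Finset.mem_insert,
    Finset.mem_image]
  rcases a with q | (⟨j', l'⟩ | (i | (u | l')))
  · simp [HA.fOpt, instSC, hsSC, hxSC]
  · simp [HA.fOpt, instSC, hxSC, eq_comm]
  · simp [HA.fOpt, instSC, hfSC, hxSC]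
  · simp [HA.fOpt, instSC, hfSC, hxSC]
  · simp [HA.fOpt, instSC, hxSC]

lemma adm_hf_card : ((instSC n m S c).admirers hfSC).card = n + 1 := by
  rw [adm_hf]
  rw [Finset.card_insert_of_notMem (by simp)]
  rw [Finset.card_image_of_injective _ (fun a b h => by simpa using h)]
  simp [add_comm]

lemma adm_hx_card (l) : ((instSC n m S c).admirers (hxSC l)).card = m + 1 := by
  rw [adm_hx]
  rw [Finset.card_insert_of_notMem (by simp)]
  rw [Finset.card_image_of_injective _ (fun a b h => by simpa using h : Function.Injective fun j => AaSC j l)]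
  simp [add_comm]

lemma adm_hs_card (p) : ((instSC n m S c).admirers (hsSC p)).card = 1 := by
  rw [adm_hs]; simp

lemma adm_hw_card (j) : ((instSC n m S c).admirers (hwSC j)).card = 0 := by
  rw [adm_hw]; simp

end Admirers
section MatchedTo

variable {n m : ℕ} {S : Fin m → Finset (Fin n)}
variable (σ : Fin n → Fin m) (hσS : ∀ i, i ∈ S (σ i)) (J : Finset (Fin m))

lemma MSC_mt_hs_pos (j : Fin m) (l : Fin (S j).card) (hinc : σ (eltSC j l) = j) :
    HA.matchedTo (MSC σ hσS J) (hsSC ⟨j, l⟩) = {AtSC ⟨j, l⟩, AeSC (eltSC j l)} := by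
  ext a
  simp only [HA.matchedTo, Finset.mem_filter, Finset.mem_univ, true_and,
    Finset.mem_insert, Finset.mem_singleton]
  rcases a with q | (⟨j', l'⟩ | (i | (u | l')))
  · simp [MSC, hsSC]
  · by_cases hj : j' ∈ J <;> simp [MSC, hj, hsSC, hxSC, hwSC]
  · simp only [MSC, hsSC, Option.some.injEq, Sum.inl.injEq]
    rw [sigma_rnk_eq_iff σ hσS]
    constructor
    · rintro ⟨h1, h2⟩
      simp [h2]
    · intro h
      have h2 : i = eltSC j l := by simpa using h
      exact ⟨by rw [h2]; exact hinc, h2⟩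
  · simp [MSC, hsSC, hfSC]
  · simp [MSC, hsSC, hxSC]

lemma MSC_mt_hs_neg (j : Fin m) (l : Fin (S j).card) (hninc : ¬ σ (eltSC j l) = j) :
    HA.matchedTo (MSC σ hσS J) (hsSC ⟨j, l⟩) = {AtSC ⟨j, l⟩} := by
  ext a
  simp only [HA.matchedTo, Finset.mem_filter, Finset.mem_univ, true_and,
    Finset.mem_singleton]
  rcases a with q | (⟨j', l'⟩ | (i | (u | l')))
  · simp [MSC, hsSC]
  · by_cases hj : j' ∈ J <;> simp [MSC, hj, hsSC, hxSC, hwSC]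
  · simp only [MSC, hsSC, Option.some.injEq, Sum.inl.injEq]
    rw [sigma_rnk_eq_iff σ hσS]
    constructor
    · rintro ⟨h1, h2⟩
      exact absurd (h2 ▸ h1) hninc
    · intro h
      simp at h
  · simp [MSC, hsSC, hfSC]
  · simp [MSC, hsSC, hxSC]

lemma MSC_mt_hw_pos (j : Fin m) (hj : j ∈ J) :
    HA.matchedTo (MSC σ hσS J) (hwSC j) = ∅ := by
  ext a
  simp only [HA.matchedTo, Finset.mem_filter, Finset.mem_univ, true_and,
    Finset.notMem_empty, iff_false]
  rcases a with q | (⟨j', l'⟩ | (i | (u | l')))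
  · simp [MSC, hsSC, hwSC]
  · by_cases hj' : j' ∈ J
    · simp [MSC, hj', hwSC, hxSC]
    · simp only [MSC, hj', if_neg, Option.some.injEq, hwSC]
      intro h
      have : j' = j := by simpa using h
      exact hj' (this ▸ hj)
  · simp [MSC, hsSC, hwSC]
  · simp [MSC, hwSC, hfSC]
  · simp [MSC, hwSC, hxSC]

lemma MSC_mt_hw_neg (j : Fin m) (hj : j ∉ J) :
    HA.matchedTo (MSC σ hσS J) (hwSC j) = Finset.univ.image fun l => AaSC j l := by
  ext a
  simp only [HA.matchedTo, Finset.mem_filter, Finset.mem_univ, true_and,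
    Finset.mem_image]
  rcases a with q | (⟨j', l'⟩ | (i | (u | l')))
  · simp [MSC, hsSC, hwSC]
  · by_cases hj' : j' ∈ J
    · simp only [MSC, hwSC, hxSC]
      rw [if_pos hj']
      constructor
      · intro h; exact absurd h (by simp)
      · rintro ⟨l'', h⟩
        obtain ⟨h1, -⟩ : j = j' ∧ l'' = l' := by simpa using h
        exact absurd hj' (h1 ▸ hj)
    · simp only [MSC, hwSC]
      rw [if_neg hj']
      constructor
      · intro h
        have h1 : j' = j := by simpa using h
        exact ⟨l', by rw [h1]⟩
      · rintro ⟨l'', h⟩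
        obtain ⟨h1, -⟩ : j = j' ∧ l'' = l' := by simpa using h
        rw [h1]
  · simp [MSC, hsSC, hwSC]
  · simp [MSC, hwSC, hfSC]
  · simp [MSC, hwSC, hxSC]

lemma MSC_mt_hx (l : Fin (n ^ 2 * m)) :
    HA.matchedTo (MSC σ hσS J) (hxSC l) = insert (AySC l) (J.image fun j => AaSC j l) := by
  ext a
  simp only [HA.matchedTo, Finset.mem_filter, Finset.mem_univ, true_and,
    Finset.mem_insert, Finset.mem_image]
  rcases a with q | (⟨j', l'⟩ | (i | (u | l')))
  · simp [MSC, hsSC, hxSC]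
  · by_cases hj' : j' ∈ J
    · simp only [MSC, hj', if_pos, Option.some.injEq, hxSC]
      constructor
      · intro h
        have : l' = l := by simpa using h
        exact Or.inr ⟨j', hj', by rw [this]⟩
      · rintro (h | ⟨j'', hj'', h⟩)
        · exact absurd h (by simp)
        · obtain ⟨-, h2⟩ : j'' = j' ∧ l = l' := by simpa using h
          rw [h2]
    · simp only [MSC, hj', if_neg, Option.some.injEq, hxSC, hwSC]
      constructor
      · intro h; exact absurd h (by simp)
      · rintro (h | ⟨j'', hj'', h⟩)
        · exact absurd h (by simp)
        · obtain ⟨h1, -⟩ : j'' = j' ∧ l = l' := by simpa using h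
          exact absurd (h1 ▸ hj'') hj'
  · simp [MSC, hsSC, hxSC]
  · simp [MSC, hxSC, hfSC]
  · simp [MSC, hxSC]

lemma MSC_mt_hf :
    HA.matchedTo (MSC σ hσS J) (hfSC : HouseSC n m S) = {(AfSC : ApplSC n m S)} := by
  ext a
  simp only [HA.matchedTo, Finset.mem_filter, Finset.mem_univ, true_and,
    Finset.mem_singleton]
  rcases a with q | (⟨j', l'⟩ | (i | (u | l')))
  · simp [MSC, hsSC, hfSC]
  · by_cases hj : j' ∈ J <;> simp [MSC, hj, hfSC, hxSC, hwSC]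
  · simp [MSC, hsSC, hfSC]
  · simp [MSC, hfSC]
  · simp [MSC, hfSC, hxSC]

end MatchedTo
section SOpt

variable {n m : ℕ} {S : Fin m → Finset (Fin n)}
variable (σ : Fin n → Fin m) (hσS : ∀ i, i ∈ S (σ i)) (k : ℕ)

lemma eltSC_symm (j : Fin m) (i : Fin n) (h : i ∈ S j) :
    eltSC j (((S j).orderIsoOfFin rfl).symm ⟨i, h⟩) = i := by
  simp [eltSC]

lemma cap_hs (j : Fin m) (l : Fin (S j).card) :
    capSC (hsSC ⟨j, l⟩ : HouseSC n m S) + rSC σ k (hsSC ⟨j, l⟩) =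
      1 + (if σ (eltSC j l) = j then 1 else 0) := rfl

lemma cap_hw (j : Fin m) :
    capSC (S := S) (hwSC j) + rSC (S := S) σ k (hwSC j) = n ^ 2 * m := rfl

lemma cap_hf : capSC (S := S) hfSC + rSC (S := S) σ k hfSC = 1 := rfl

lemma cap_hx (l : Fin (n ^ 2 * m)) :
    capSC (S := S) (hxSC l) + rSC (S := S) σ k (hxSC l) = 1 + k := rfl

lemma sOpt_Ae (i : Fin n) :
    (instSC n m S fun h => capSC h + rSC σ k h).sOpt (AeSC i) =
      some (hsSC ⟨σ i, rnkSC σ hσS i⟩) := by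
  set c : HouseSC n m S → ℕ := fun h => capSC h + rSC σ k h with hc
  have hhead : ((instSC n m S c).pref (AeSC i)).head? = some hfSC := rfl
  simp only [HA.sOpt, hhead]
  have hnle : ¬ ((instSC n m S c).admirers hfSC).card ≤ (instSC n m S c).cap hfSC := by
    have h1 : (instSC n m S c).cap hfSC = 1 := rfl
    rw [adm_hf_card, h1]
    have := i.pos
    omega
  rw [if_neg hnle]
  have hpref : (instSC n m S c).pref (AeSC i) =
      hfSC :: (List.finRange m).filterMap (fun j =>
        if h : i ∈ S j then
          some (hsSC ⟨j, ((S j).orderIsoOfFin rfl).symm ⟨i, h⟩⟩)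
        else none) := rfl
  rw [hpref, List.find?_cons_of_neg]
  swap
  · have h1 : (instSC n m S c).cap hfSC = 1 := rfl
    simp [adm_hf_card, h1]
  apply find?_eq_some_unique
  · exact List.mem_filterMap.mpr ⟨σ i, List.mem_finRange _, by rw [dif_pos (hσS i)]; rfl⟩
  · have h1 : (instSC n m S c).cap (hsSC ⟨σ i, rnkSC σ hσS i⟩) =
        1 + (if σ (eltSC (σ i) (rnkSC σ hσS i)) = σ i then 1 else 0) := rfl
    simp [adm_hs_card, h1, eltSC_rnkSC σ hσS i]
  · intro x hx hpx
    obtain ⟨j, -, hgj⟩ := List.mem_filterMap.mp hx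
    by_cases hiS : i ∈ S j
    · rw [dif_pos hiS] at hgj
      obtain rfl : x = hsSC ⟨j, ((S j).orderIsoOfFin rfl).symm ⟨i, hiS⟩⟩ :=
        (Option.some.injEq _ _ ▸ hgj).symm
      have h1 : (instSC n m S c).cap (hsSC ⟨j, ((S j).orderIsoOfFin rfl).symm ⟨i, hiS⟩⟩) =
          1 + (if σ (eltSC j (((S j).orderIsoOfFin rfl).symm ⟨i, hiS⟩)) = j then 1 else 0) := rfl
      rw [eltSC_symm j i hiS] at h1
      simp only [adm_hs_card, h1, decide_eq_true_eq] at hpx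
      have hσij : σ i = j := by
        by_contra hne
        rw [if_neg hne] at hpx
        omega
      subst hσij
      rfl
    · rw [dif_neg hiS] at hgj
      exact absurd hgj (by simp)

lemma sOpt_Aa (J : Finset (Fin m)) (hσJ : ∀ i, σ i ∈ J) (hJcard : J.card = k)
    (j : Fin m) (hj : j ∉ J) (l : Fin (n ^ 2 * m)) :
    (instSC n m S fun h => capSC h + rSC σ k h).sOpt (AaSC j l) = some (hwSC j) := by
  set c : HouseSC n m S → ℕ := fun h => capSC h + rSC σ k h with hc
  have hkm : k < m := by
    rw [← hJcard]
    have hssub : J ⊂ Finset.univ := by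
      refine Finset.ssubset_univ_iff.mpr ?_
      intro hJu
      exact hj (hJu ▸ Finset.mem_univ j)
    simpa using Finset.card_lt_card hssub
  have hhead : ((instSC n m S c).pref (AaSC j l)).head? = some (hxSC l) := rfl
  simp only [HA.sOpt, hhead]
  have hcx : (instSC n m S c).cap (hxSC l) = 1 + k := rfl
  have hnle : ¬ ((instSC n m S c).admirers (hxSC l)).card ≤ (instSC n m S c).cap (hxSC l) := by
    rw [adm_hx_card, hcx]
    omega
  rw [if_neg hnle]
  have hpref : (instSC n m S c).pref (AaSC j l) =
      hxSC l :: (((List.finRange (S j).card).map fun i => hsSC ⟨j, i⟩) ++ [hwSC j]) := rfl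
  rw [hpref, List.find?_cons_of_neg]
  swap
  · rw [decide_eq_true_eq, adm_hx_card, hcx]
    omega
  apply find?_eq_some_unique
  · exact List.mem_append_right _ (List.mem_singleton.mpr rfl)
  · have hcw : (instSC n m S c).cap (hwSC j) = n ^ 2 * m := rfl
    rw [decide_eq_true_eq, adm_hw_card, hcw]
    exact l.pos
  · intro x hx hpx
    rcases List.mem_append.mp hx with hx | hx
    · obtain ⟨i', -, rfl⟩ := List.mem_map.mp hx
      have h1 : (instSC n m S c).cap (hsSC ⟨j, i'⟩) =
          1 + (if σ (eltSC j i') = j then 1 else 0) := rfl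
      rw [decide_eq_true_eq, adm_hs_card, h1] at hpx
      have : σ (eltSC j i') = j := by
        by_contra hne
        rw [if_neg hne] at hpx
        omega
      exact absurd (this ▸ hσJ (eltSC j i')) hj
    · exact List.mem_singleton.mp hx

end SOpt

/-- if the set cover instance `(E, S)` admits a set cover using `k` sets,
then there is a capacity increase vector `r ≥ 0` with `|r|_∞ ≤ k` such that the
reduction instance with capacities `q + r` admits a perfect popular matching. -/
theorem setCover_gives_increase (n m k : ℕ) (S : Fin m → Finset (Fin n))
    (J : Finset (Fin m)) (hJcard : J.card = k) (hJcover : ∀ i, ∃ j ∈ J, i ∈ S j) :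
    ∃ r : HouseSC n m S → ℕ, (∀ h, r h ≤ k) ∧
      ∃ M, HA.Perfect M ∧ (instSC n m S fun h => capSC h + r h).Popular M := by
  classical
  choose σ hσJ hσS using hJcover
  set c : HouseSC n m S → ℕ := fun h => capSC h + rSC σ k h with hc
  have hkpos : ∀ i : Fin n, 1 ≤ k := fun i => by
    rw [← hJcard]
    exact Finset.card_pos.mpr ⟨σ i, hσJ i⟩
  refine ⟨rSC σ k, ?_, MSC σ hσS J, ?_, ?_⟩
  · -- the increase is at most k everywhere
    rintro (⟨j, l⟩ | (j | (u | l)))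
    · by_cases hinc : σ (eltSC j l) = j
      · simpa [rSC, hinc] using hkpos (eltSC j l)
      · simp [rSC, hinc]
    · simp [rSC]
    · simp [rSC]
    · simp [rSC]
  · -- perfection
    rintro (q | (⟨j, l⟩ | (i | (u | l))))
    · simp [MSC]
    · by_cases hj : j ∈ J <;> simp [MSC, hj]
    · simp [MSC]
    · simp [MSC]
    · simp [MSC]
  · -- popularity
    have hperf : HA.Perfect (MSC σ hσS J) := by
      rintro (q | (⟨j, l⟩ | (i | (u | l))))
      · simp [MSC]
      · by_cases hj : j ∈ J <;> simp [MSC, hj]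
      · simp [MSC]
      · simp [MSC]
      · simp [MSC]
    have hMatch : (instSC n m S c).IsMatching (MSC σ hσS J) := by
      constructor
      · -- only acceptable houses are assigned
        rintro (q | (⟨j, l⟩ | (i | (u | l)))) h hMh
        · obtain rfl : hsSC q = h := by simpa [MSC] using hMh
          simp [instSC]
        · by_cases hj : j ∈ J
          · obtain rfl : hxSC l = h := by simpa [MSC, hj] using hMh
            simp [instSC]
          · obtain rfl : hwSC j = h := by simpa [MSC, hj] using hMh
            simp [instSC]
        · obtain rfl : hsSC ⟨σ i, rnkSC σ hσS i⟩ = h := by simpa [MSC] using hMh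
          have : hsSC ⟨σ i, rnkSC σ hσS i⟩ ∈ (List.finRange m).filterMap (fun j =>
              if h : i ∈ S j then
                some (hsSC (S := S) ⟨j, ((S j).orderIsoOfFin rfl).symm ⟨i, h⟩⟩)
              else none) :=
            List.mem_filterMap.mpr ⟨σ i, List.mem_finRange _, by rw [dif_pos (hσS i)]; rfl⟩
          simp only [instSC]
          exact List.mem_cons_of_mem _ this
        · obtain rfl : hfSC = h := by simpa [MSC] using hMh
          simp [instSC]
        · obtain rfl : hxSC l = h := by simpa [MSC] using hMh
          simp [instSC]
      · -- capacities are respected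
        rintro (⟨j, l⟩ | (j | (u | l)))
        · show (HA.matchedTo (MSC σ hσS J) (hsSC ⟨j, l⟩)).card ≤ c (hsSC ⟨j, l⟩)
          show (HA.matchedTo (MSC σ hσS J) (hsSC ⟨j, l⟩)).card ≤
            capSC (hsSC ⟨j, l⟩) + rSC σ k (hsSC ⟨j, l⟩)
          rw [cap_hs σ k j l]
          by_cases hinc : σ (eltSC j l) = j
          · rw [MSC_mt_hs_pos σ hσS J j l hinc, if_pos hinc]
            have hne : AtSC ⟨j, l⟩ ≠ AeSC (eltSC j l) := by simp
            rw [Finset.card_insert_of_notMem (by simpa using hne), Finset.card_singleton]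
          · rw [MSC_mt_hs_neg σ hσS J j l hinc, Finset.card_singleton]
            omega
        · show (HA.matchedTo (MSC σ hσS J) (hwSC j)).card ≤ c (hwSC j)
          show (HA.matchedTo (MSC σ hσS J) (hwSC j)).card ≤
            capSC (S := S) (hwSC j) + rSC σ k (hwSC j)
          rw [cap_hw σ k j]
          by_cases hj : j ∈ J
          · rw [MSC_mt_hw_pos σ hσS J j hj]
            simp
          · rw [MSC_mt_hw_neg σ hσS J j hj]
            rw [Finset.card_image_of_injective _ (fun a b h => by simpa using h :
              Function.Injective fun l => AaSC (S := S) j l)]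
            simp
        · show (HA.matchedTo (MSC σ hσS J) hfSC).card ≤ c hfSC
          show (HA.matchedTo (MSC σ hσS J) hfSC).card ≤
            capSC (S := S) hfSC + rSC σ k hfSC
          rw [cap_hf σ k, MSC_mt_hf σ hσS J, Finset.card_singleton]
        · show (HA.matchedTo (MSC σ hσS J) (hxSC l)).card ≤ c (hxSC l)
          show (HA.matchedTo (MSC σ hσS J) (hxSC l)).card ≤
            capSC (S := S) (hxSC l) + rSC σ k (hxSC l)
          rw [cap_hx σ k l, MSC_mt_hx σ hσS J l]
          rw [Finset.card_insert_of_notMem (by simp)]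
          rw [Finset.card_image_of_injective _ (fun a b h => by simpa using h :
            Function.Injective fun j => AaSC (S := S) j l)]
          omega
    refine popular_of_struct _ _ hMatch hperf ?_ ?_
    · -- everyone is matched to their f- or s-house
      rintro (q | (⟨j, l⟩ | (i | (u | l))))
      · left; rfl
      · by_cases hj : j ∈ J
        · left
          rw [fOpt_Aa]
          simp [MSC, hj]
        · right
          rw [sOpt_Aa σ k J hσJ hJcard j hj l]
          simp [MSC, hj]
      · right
        rw [sOpt_Ae σ hσS k i]
        simp [MSC]
      · left; rfl
      · left; rfl
    · -- oversubscribed houses are exactly filled by admirers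
      rintro (⟨j, l⟩ | (j | (u | l))) hch
      · have hch' : 1 + (if σ (eltSC j l) = j then 1 else 0) ≤
            ((instSC n m S fun h => capSC h + rSC σ k h).admirers (hsSC ⟨j, l⟩)).card := hch
        rw [adm_hs_card] at hch'
        have hninc : ¬ σ (eltSC j l) = j := by
          intro hinc
          rw [if_pos hinc] at hch'
          omega
        constructor
        · show (HA.matchedTo (MSC σ hσS J) (hsSC ⟨j, l⟩)).card =
            1 + (if σ (eltSC j l) = j then 1 else 0)
          rw [MSC_mt_hs_neg σ hσS J j l hninc, Finset.card_singleton, if_neg hninc]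
        · intro a ha
          have ha' : a ∈ HA.matchedTo (MSC σ hσS J) (hsSC ⟨j, l⟩) := ha
          rw [MSC_mt_hs_neg σ hσS J j l hninc] at ha'
          obtain rfl : a = AtSC ⟨j, l⟩ := Finset.mem_singleton.mp ha'
          rfl
      · have hch' : n ^ 2 * m ≤
            ((instSC n m S fun h => capSC h + rSC σ k h).admirers (hwSC j)).card := hch
        rw [adm_hw_card] at hch'
        have hN : n ^ 2 * m = 0 := by omega
        have hemp : HA.matchedTo (MSC σ hσS J) (hwSC j) = ∅ := by
          by_cases hj : j ∈ J
          · exact MSC_mt_hw_pos σ hσS J j hj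
          · rw [MSC_mt_hw_neg σ hσS J j hj]
            have huniv : (Finset.univ : Finset (Fin (n ^ 2 * m))) = ∅ := by
              rw [Finset.eq_empty_iff_forall_notMem]
              intro l
              have := l.pos
              omega
            rw [huniv, Finset.image_empty]
        constructor
        · show (HA.matchedTo (MSC σ hσS J) (hwSC j)).card = n ^ 2 * m + 0
          rw [hemp, Finset.card_empty]
          omega
        · intro a ha
          have ha' : a ∈ HA.matchedTo (MSC σ hσS J) (hwSC j) := ha
          rw [hemp] at ha'
          exact absurd ha' (Finset.notMem_empty a)
      · constructor
        · show (HA.matchedTo (MSC σ hσS J) hfSC).card = 1 + 0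
          rw [MSC_mt_hf σ hσS J, Finset.card_singleton]
        · intro a ha
          have ha' : a ∈ HA.matchedTo (MSC σ hσS J) (hfSC : HouseSC n m S) := ha
          rw [MSC_mt_hf σ hσS J] at ha'
          obtain rfl : a = AfSC := Finset.mem_singleton.mp ha'
          rfl
      · constructor
        · show (HA.matchedTo (MSC σ hσS J) (hxSC l)).card = 1 + k
          rw [MSC_mt_hx σ hσS J l]
          rw [Finset.card_insert_of_notMem (by simp)]
          rw [Finset.card_image_of_injective _ (fun a b h => by simpa using h :
            Function.Injective fun j => AaSC (S := S) j l)]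
          rw [hJcard]
          omega
        · intro a ha
          have ha' : a ∈ HA.matchedTo (MSC σ hσS J) (hxSC l) := ha
          rw [MSC_mt_hx σ hσS J l] at ha'
          rcases Finset.mem_insert.mp ha' with rfl | ha''
          · rfl
          · obtain ⟨j, -, rfl⟩ := Finset.mem_image.mp ha''
            rfl
end
end

section
/- Let (E, S) be a set cover instance with E = {e_1,…,e_n̂} and S = {S_1,…,S_m̂} in which every element belongs to at least one set, let d, k be positive integers with d·k < n̂², let N = n̂² m̂ and l_j = |S_j|, and let I' be the capacitated house allocation instance constructed as follows: for each set S_j there are houses s_j^1,…,s_j^{l_j} of capacity 1 with dummy applicants t_j^1,…,t_j^{l_j} (t_j^l accepts only s_j^l), a house w_j of capacity N, and applicants a_j^1,…,a_j^N with preference a_j^l : x^l ≻ s_j^1 ≻ ⋯ ≻ s_j^{l_j} ≻ w_j; for each element e_i there is an applicant e_i whose preference list is f followed by the houses s_j^l such that e_i ∈ S_j and e_i is the l-th smallest-index element of S_j, in increasing order; there is a house f of capacity 1 with a dummy applicant f' accepting only f; and there are houses x^1,…,x^N of capacity 1 with dummy applicants y^1,…,y^N (y^l accepts only x^l). Suppose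 r is a capacity change vector with |r|_∞ ≤ d·k such that the instance with capacities q + r admits a perfect popular matching. Then the family J = {S_j : r[s_j^l] > 0 for some l} satisfies |J| ≤ d·k and the sets in J cover at least n̂ − d·k elements of E; consequently (E, S) admits a set cover using at most 2·d·k sets. -/
noncomputable section

open Finset

attribute [local instance] Classical.propDecidable

section DominationTools

open HA

variable {A H : Type*} [Fintype A]

lemma better_some_some {l : List H} {h h' : H} :
    Better l (some h) (some h') ↔ h ∈ l ∧ l.idxOf h < l.idxOf h' := Iff.rfl

lemma better_irrefl (l : List H) (x : Option H) : ¬ Better l x x := by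
  cases x with
  | none => exact fun h => h
  | some h => rintro ⟨-, h2⟩; exact lt_irrefl _ h2

/-- If some applicant could move to a strictly better house having a free slot,
the matching is not popular. -/
lemma no_free_slot {I : HA A H} {M : A → Option H} (hpop : I.Popular M)
    {p : A} {hp h1 : H} (hMp : M p = some hp)
    (hmem : h1 ∈ I.pref p) (hlt : (I.pref p).idxOf h1 < (I.pref p).idxOf hp)
    (hfree : (HA.matchedTo M h1).card < I.cap h1) : False := by
  classical
  set M' := Function.update M p (some h1) with hM'
  have hmem' : ∀ a h, M' a = some h → h ∈ I.pref a := by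
    intro a h ha
    rcases eq_or_ne a p with rfl | hne
    · rw [hM', Function.update_self] at ha
      injection ha with ha; subst ha; exact hmem
    · rw [hM', Function.update_of_ne hne] at ha; exact hpop.1.1 a h ha
  have hcap' : ∀ h, (univ.filter fun a => M' a = some h).card ≤ I.cap h := by
    intro h
    rcases eq_or_ne h h1 with rfl | hh
    · have hsub : (univ.filter fun a => M' a = some h) ⊆ insert p (HA.matchedTo M h) := by
        intro a ha
        simp only [Finset.mem_filter, Finset.mem_univ, true_and] at ha
        rcases eq_or_ne a p with rfl | hne
        · exact Finset.mem_insert_self _ _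
        · rw [hM', Function.update_of_ne hne] at ha
          exact Finset.mem_insert_of_mem (by simp [HA.matchedTo, ha])
      calc (univ.filter fun a => M' a = some h).card
          ≤ (insert p (HA.matchedTo M h)).card := Finset.card_le_card hsub
        _ ≤ (HA.matchedTo M h).card + 1 := Finset.card_insert_le _ _
        _ ≤ I.cap h := hfree
    · refine le_trans (Finset.card_le_card ?_) (hpop.1.2 h)
      intro a ha
      simp only [Finset.mem_filter, Finset.mem_univ, true_and] at ha ⊢
      rcases eq_or_ne a p with rfl | hne
      · rw [hM', Function.update_self] at ha
        injection ha with ha; exact absurd ha.symm hh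
      · rwa [hM', Function.update_of_ne hne] at ha
  refine hpop.2 M' ⟨hmem', hcap'⟩ ?_
  unfold HA.Dominates
  have hbet : (univ.filter fun a => Better (I.pref a) (M a) (M' a)) = ∅ := by
    refine Finset.eq_empty_of_forall_notMem fun a ha => ?_
    simp only [Finset.mem_filter, Finset.mem_univ, true_and] at ha
    rcases eq_or_ne a p with rfl | hne
    · rw [hM', Function.update_self, hMp] at ha
      rw [better_some_some] at ha
      omega
    · rw [hM', Function.update_of_ne hne] at ha
      exact better_irrefl _ _ ha
  have hbet2 : 0 < (univ.filter fun a => Better (I.pref a) (M' a) (M a)).card := by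
    refine Finset.card_pos.2 ⟨p, ?_⟩
    simp only [Finset.mem_filter, Finset.mem_univ, true_and]
    rw [hM', Function.update_self, hMp, better_some_some]
    exact ⟨hmem, hlt⟩
  rw [hbet]
  simpa using hbet2

/-- If `p` can move to a strictly better house `h1`, whose occupant `z` can move
to a strictly better house `h2`, from which we can evict `u`, the matching is
not popular: two applicants improve and only one gets worse. -/
lemma no_chain {I : HA A H} {M : A → Option H} (hpop : I.Popular M)
    {p z u : A} {hp h1 h2 : H}
    (hpz : p ≠ z) (hpu : p ≠ u) (hzu : z ≠ u)
    (hMp : M p = some hp) (hMz : M z = some h1) (hMu : M u = some h2)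
    (h1mem : h1 ∈ I.pref p)
    (hlt1 : (I.pref p).idxOf h1 < (I.pref p).idxOf hp)
    (h2mem : h2 ∈ I.pref z)
    (hlt2 : (I.pref z).idxOf h2 < (I.pref z).idxOf h1) : False := by
  classical
  have h1nep : h1 ≠ hp := fun h => by rw [h] at hlt1; exact lt_irrefl _ hlt1
  have h2ne1 : h2 ≠ h1 := fun h => by rw [h] at hlt2; exact lt_irrefl _ hlt2
  have hz1mem : h1 ∈ I.pref z := hpop.1.1 z h1 hMz
  set M' := Function.update (Function.update (Function.update M u none) p (some h1)) z
    (some h2) with hM'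
  have hM'z : M' z = some h2 := by rw [hM', Function.update_self]
  have hM'p : M' p = some h1 := by
    rw [hM', Function.update_of_ne hpz, Function.update_self]
  have hM'u : M' u = none := by
    rw [hM', Function.update_of_ne hzu.symm, Function.update_of_ne hpu.symm,
      Function.update_self]
  have hM'other : ∀ a, a ≠ p → a ≠ z → a ≠ u → M' a = M a := by
    intro a hap haz hau
    rw [hM', Function.update_of_ne haz, Function.update_of_ne hap, Function.update_of_ne hau]
  have hmem' : ∀ a h, M' a = some h → h ∈ I.pref a := by
    intro a h ha
    rcases eq_or_ne a p with rfl | hap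
    · rw [hM'p] at ha; injection ha with ha; subst ha; exact h1mem
    · rcases eq_or_ne a z with rfl | haz
      · rw [hM'z] at ha; injection ha with ha; subst ha; exact h2mem
      · rcases eq_or_ne a u with rfl | hau
        · rw [hM'u] at ha; exact absurd ha (by simp)
        · rw [hM'other a hap haz hau] at ha; exact hpop.1.1 a h ha
  have hcap' : ∀ h, (univ.filter fun a => M' a = some h).card ≤ I.cap h := by
    intro h
    rcases eq_or_ne h h1 with rfl | hh1
    · have hzmem : z ∈ HA.matchedTo M h := by simp [HA.matchedTo, hMz]
      have hsub : (univ.filter fun a => M' a = some h) ⊆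
          insert p ((HA.matchedTo M h).erase z) := by
        intro a ha
        simp only [Finset.mem_filter, Finset.mem_univ, true_and] at ha
        rcases eq_or_ne a p with rfl | hap
        · exact Finset.mem_insert_self _ _
        · rcases eq_or_ne a z with rfl | haz
          · rw [hM'z] at ha; injection ha with ha; exact absurd ha h2ne1
          · rcases eq_or_ne a u with rfl | hau
            · rw [hM'u] at ha; exact absurd ha (by simp)
            · rw [hM'other a hap haz hau] at ha
              exact Finset.mem_insert_of_mem
                (Finset.mem_erase.2 ⟨haz, by simp [HA.matchedTo, ha]⟩)
      calc (univ.filter fun a => M' a = some h).card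
          ≤ (insert p ((HA.matchedTo M h).erase z)).card := Finset.card_le_card hsub
        _ ≤ ((HA.matchedTo M h).erase z).card + 1 := Finset.card_insert_le _ _
        _ = (HA.matchedTo M h).card - 1 + 1 := by rw [Finset.card_erase_of_mem hzmem]
        _ ≤ I.cap h := by
            have h1 : 0 < (HA.matchedTo M h).card := Finset.card_pos.2 ⟨z, hzmem⟩
            have h2 : (HA.matchedTo M h).card ≤ I.cap h := hpop.1.2 h
            omega
    · rcases eq_or_ne h h2 with rfl | hh2
      · have humem : u ∈ HA.matchedTo M h := by simp [HA.matchedTo, hMu]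
        have hsub : (univ.filter fun a => M' a = some h) ⊆
            insert z ((HA.matchedTo M h).erase u) := by
          intro a ha
          simp only [Finset.mem_filter, Finset.mem_univ, true_and] at ha
          rcases eq_or_ne a z with rfl | haz
          · exact Finset.mem_insert_self _ _
          · rcases eq_or_ne a p with rfl | hap
            · rw [hM'p] at ha; injection ha with ha; exact absurd ha.symm hh1
            · rcases eq_or_ne a u with rfl | hau
              · rw [hM'u] at ha; exact absurd ha (by simp)
              · rw [hM'other a hap haz hau] at ha
                exact Finset.mem_insert_of_mem
                  (Finset.mem_erase.2 ⟨hau, by simp [HA.matchedTo, ha]⟩)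
        calc (univ.filter fun a => M' a = some h).card
            ≤ (insert z ((HA.matchedTo M h).erase u)).card := Finset.card_le_card hsub
          _ ≤ ((HA.matchedTo M h).erase u).card + 1 := Finset.card_insert_le _ _
          _ = (HA.matchedTo M h).card - 1 + 1 := by rw [Finset.card_erase_of_mem humem]
          _ ≤ I.cap h := by
              have hc1 : 0 < (HA.matchedTo M h).card := Finset.card_pos.2 ⟨u, humem⟩
              have hc2 : (HA.matchedTo M h).card ≤ I.cap h := hpop.1.2 h
              omega
      · refine le_trans (Finset.card_le_card ?_) (hpop.1.2 h)
        intro a ha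
        simp only [Finset.mem_filter, Finset.mem_univ, true_and] at ha ⊢
        rcases eq_or_ne a p with rfl | hap
        · rw [hM'p] at ha; injection ha with ha; exact absurd ha.symm hh1
        · rcases eq_or_ne a z with rfl | haz
          · rw [hM'z] at ha; injection ha with ha; exact absurd ha.symm hh2
          · rcases eq_or_ne a u with rfl | hau
            · rw [hM'u] at ha; exact absurd ha (by simp)
            · rwa [hM'other a hap haz hau] at ha
  refine hpop.2 M' ⟨hmem', hcap'⟩ ?_
  unfold HA.Dominates
  have hworse : (univ.filter fun a => Better (I.pref a) (M a) (M' a)) ⊆ {u} := by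
    intro a ha
    simp only [Finset.mem_filter, Finset.mem_univ, true_and] at ha
    simp only [Finset.mem_singleton]
    by_contra hau
    rcases eq_or_ne a p with rfl | hap
    · rw [hM'p, hMp, better_some_some] at ha; omega
    · rcases eq_or_ne a z with rfl | haz
      · rw [hM'z, hMz, better_some_some] at ha; omega
      · rw [hM'other a hap haz hau] at ha; exact better_irrefl _ _ ha
  have hbetter : ({p, z} : Finset A) ⊆
      univ.filter fun a => Better (I.pref a) (M' a) (M a) := by
    intro a ha
    simp only [Finset.mem_insert, Finset.mem_singleton] at ha
    simp only [Finset.mem_filter, Finset.mem_univ, true_and]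
    rcases ha with rfl | rfl
    · rw [hM'p, hMp, better_some_some]; exact ⟨h1mem, hlt1⟩
    · rw [hM'z, hMz, better_some_some]; exact ⟨h2mem, hlt2⟩
  have hb2 : 2 ≤ (univ.filter fun a => Better (I.pref a) (M' a) (M a)).card := by
    calc 2 = ({p, z} : Finset A).card := (Finset.card_pair hpz).symm
      _ ≤ _ := Finset.card_le_card hbetter
  have hw1 : (univ.filter fun a => Better (I.pref a) (M a) (M' a)).card ≤ 1 := by
    calc _ ≤ ({u} : Finset A).card := Finset.card_le_card hworse
      _ = 1 := Finset.card_singleton u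
  omega

end DominationTools
section InstanceTools

open HA List

lemma idxOf_map_of_injective {α β : Type*} [DecidableEq α] [DecidableEq β]
    {g : α → β} (hg : Function.Injective g) (L : List α) (a : α) :
    (L.map g).idxOf (g a) = L.idxOf a := by
  induction L with
  | nil => rfl
  | cons b t ih =>
    rcases eq_or_ne a b with rfl | hne
    · simp
    · rw [List.map_cons, List.idxOf_cons_ne _ (fun h => hne (hg h).symm),
        List.idxOf_cons_ne _ (Ne.symm hne), ih]

/-- Pin the `BEq` instance on houses to the classical one used by `Better`. -/
abbrev houseBEq {n m : ℕ} {S : Fin m → Finset (Fin n)} : BEq (HouseSC n m S) :=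
  @instBEqOfDecidableEq _ fun a b => Classical.propDecidable (a = b)

attribute [local instance 2000] houseBEq

/-- Pin the `DecidableEq` instance on houses to the classical one. -/
abbrev houseDEq {n m : ℕ} {S : Fin m → Finset (Fin n)} : DecidableEq (HouseSC n m S) :=
  fun a b => Classical.propDecidable (a = b)

attribute [local instance 2000] houseDEq

variable {n m : ℕ} {S : Fin m → Finset (Fin n)} {c : HouseSC n m S → ℕ}

/-- The applicant `a_j^l`. -/
def aApp (j : Fin m) (l : Fin (n ^ 2 * m)) : ApplSC n m S := Sum.inr (Sum.inl (j, l))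
/-- The applicant `e_i`. -/
def eApp (i : Fin n) : ApplSC n m S := Sum.inr (Sum.inr (Sum.inl i))
/-- The dummy applicant `f'`. -/
def fApp : ApplSC n m S := Sum.inr (Sum.inr (Sum.inr (Sum.inl ())))
/-- The dummy applicant `y^l`. -/
def yApp (l : Fin (n ^ 2 * m)) : ApplSC n m S := Sum.inr (Sum.inr (Sum.inr (Sum.inr l)))

lemma prefA (j : Fin m) (l : Fin (n ^ 2 * m)) :
    (instSC n m S c).pref (aApp j l) =
      hxSC l :: (((List.finRange (S j).card).map fun i => hsSC ⟨j, i⟩) ++ [hwSC j]) := rfl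

lemma prefE (i : Fin n) :
    (instSC n m S c).pref (eApp i) =
      hfSC :: (List.finRange m).filterMap (fun j =>
        if h : i ∈ S j then
          some (hsSC ⟨j, ((S j).orderIsoOfFin rfl).symm ⟨i, h⟩⟩)
        else none) := rfl

lemma hsSC_injective : Function.Injective (hsSC (n := n) (m := m) (S := S)) :=
  fun _ _ h => Sum.inl.inj h

lemma hsSC_mk_injective (j : Fin m) :
    Function.Injective (fun i : Fin (S j).card => (hsSC ⟨j, i⟩ : HouseSC n m S)) := by
  intro a b h
  have h2 : (⟨j, a⟩ : Σ j : Fin m, Fin (S j).card) = ⟨j, b⟩ := hsSC_injective h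
  simpa using h2

lemma idx_s (j : Fin m) (l : Fin (n ^ 2 * m)) (i : Fin (S j).card) :
    ((instSC n m S c).pref (aApp j l)).idxOf (hsSC ⟨j, i⟩) = i + 1 := by
  rw [prefA, List.idxOf_cons_ne _ (by simp [hsSC, hxSC]),
    List.idxOf_append_of_mem (by simp [List.mem_map]),
    idxOf_map_of_injective (hsSC_mk_injective j), List.idxOf_finRange]

lemma idx_w (j : Fin m) (l : Fin (n ^ 2 * m)) :
    ((instSC n m S c).pref (aApp j l)).idxOf (hwSC j) = (S j).card + 1 := by
  rw [prefA, List.idxOf_cons_ne _ (by simp [hwSC, hxSC]),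
    List.idxOf_append_of_notMem (by simp [hwSC, hsSC]),
    List.length_map, List.length_finRange]
  simp

lemma mem_s_prefA (j : Fin m) (l : Fin (n ^ 2 * m)) (i : Fin (S j).card) :
    (hsSC ⟨j, i⟩ : HouseSC n m S) ∈ (instSC n m S c).pref (aApp j l) := by
  rw [prefA]
  exact List.mem_cons_of_mem _ (List.mem_append_left _
    (List.mem_map.2 ⟨i, List.mem_finRange i, rfl⟩))

lemma memA_cases {j : Fin m} {l : Fin (n ^ 2 * m)} {h : HouseSC n m S}
    (hmem : h ∈ (instSC n m S c).pref (aApp j l)) :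
    h = hxSC l ∨ (∃ i : Fin (S j).card, h = hsSC ⟨j, i⟩) ∨ h = hwSC j := by
  rw [prefA] at hmem
  rcases List.mem_cons.1 hmem with h1 | h2
  · exact Or.inl h1
  rcases List.mem_append.1 h2 with h3 | h4
  · obtain ⟨i, -, rfl⟩ := List.mem_map.1 h3
    exact Or.inr (Or.inl ⟨i, rfl⟩)
  · exact Or.inr (Or.inr (List.mem_singleton.1 h4))

lemma memE_cases {i : Fin n} {h : HouseSC n m S}
    (hmem : h ∈ (instSC n m S c).pref (eApp i)) :
    h = hfSC ∨ ∃ j, ∃ _ : i ∈ S j, ∃ i' : Fin (S j).card, h = hsSC ⟨j, i'⟩ := by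
  rw [prefE] at hmem
  rcases List.mem_cons.1 hmem with h1 | h2
  · exact Or.inl h1
  · obtain ⟨j, -, hj⟩ := List.mem_filterMap.1 h2
    by_cases hij : i ∈ S j
    · rw [dif_pos hij] at hj
      injection hj with hj
      exact Or.inr ⟨j, hij, _, hj.symm⟩
    · rw [dif_neg hij] at hj
      exact absurd hj (by simp)

/-- Anyone matched to / accepting `s_j^i` is `t_j^i`, some `a_j^l`, or some `e_{i'}`
with `i' ∈ S j`. -/
lemma accepts_s {j : Fin m} {i : Fin (S j).card} {z : ApplSC n m S}
    (hz : (hsSC ⟨j, i⟩ : HouseSC n m S) ∈ (instSC n m S c).pref z) :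
    z = Sum.inl ⟨j, i⟩ ∨ (∃ l, z = aApp j l) ∨ ∃ i', ∃ _ : i' ∈ S j, z = eApp i' := by
  rcases z with p | ⟨⟨j', l'⟩ | i' | u | l'⟩
  · left
    have : (hsSC ⟨j, i⟩ : HouseSC n m S) = hsSC p := List.mem_singleton.1 hz
    rw [hsSC_injective this]
  · right; left
    rcases memA_cases hz with h1 | ⟨i'', h2⟩ | h3
    · exact absurd h1 (by simp [hsSC, hxSC])
    · have : (⟨j, i⟩ : Σ j : Fin m, Fin (S j).card) = ⟨j', i''⟩ := hsSC_injective h2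
      obtain ⟨rfl, -⟩ := Sigma.mk.inj_iff.1 this
      exact ⟨l', rfl⟩
    · exact absurd h3 (by simp [hsSC, hwSC])
  · right; right
    rcases memE_cases hz with h1 | ⟨j', hij', i'', h2⟩
    · exact absurd h1 (by simp [hsSC, hfSC])
    · have : (⟨j, i⟩ : Σ j : Fin m, Fin (S j).card) = ⟨j', i''⟩ := hsSC_injective h2
      obtain ⟨rfl, -⟩ := Sigma.mk.inj_iff.1 this
      exact ⟨i', hij', rfl⟩
  · exact absurd (List.mem_singleton.1 hz) (by simp [hsSC, hfSC])
  · exact absurd (List.mem_singleton.1 hz) (by simp [hsSC, hxSC])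

section Matched

variable {M : ApplSC n m S → Option (HouseSC n m S)}

lemma matched_t (hperf : HA.Perfect M) (hmatch : (instSC n m S c).IsMatching M)
    (p : Σ j : Fin m, Fin (S j).card) : M (Sum.inl p) = some (hsSC p) := by
  obtain ⟨h, hh⟩ := Option.isSome_iff_exists.1 (hperf (Sum.inl p))
  have h2 : h ∈ [hsSC p] := hmatch.1 _ _ hh
  rw [hh, List.mem_singleton.1 h2]

lemma matched_y (hperf : HA.Perfect M) (hmatch : (instSC n m S c).IsMatching M)
    (l : Fin (n ^ 2 * m)) : M (yApp l) = some (hxSC l) := by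
  obtain ⟨h, hh⟩ := Option.isSome_iff_exists.1 (hperf (yApp l))
  have h2 : h ∈ [hxSC l] := hmatch.1 _ _ hh
  rw [hh, List.mem_singleton.1 h2]

lemma matched_f (hperf : HA.Perfect M) (hmatch : (instSC n m S c).IsMatching M) :
    M (fApp : ApplSC n m S) = some hfSC := by
  obtain ⟨h, hh⟩ := Option.isSome_iff_exists.1 (hperf fApp)
  have h2 : h ∈ [(hfSC : HouseSC n m S)] := hmatch.1 _ _ hh
  rw [hh, List.mem_singleton.1 h2]

/-- The key structural fact from popularity: no applicant `a_j^l` is matched strictly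
below an `s`-house of column `j` whose capacity is at least 2. -/
lemma key_F (hperf : HA.Perfect M) (hpop : (instSC n m S c).Popular M)
    {j : Fin m} {i : Fin (S j).card} (hcap : 2 ≤ c (hsSC ⟨j, i⟩))
    {l : Fin (n ^ 2 * m)} {hp : HouseSC n m S} (hMp : M (aApp j l) = some hp)
    (hbad : hp = hwSC j ∨ ∃ i' : Fin (S j).card, (i : ℕ) < (i' : ℕ) ∧ hp = hsSC ⟨j, i'⟩) :
    False := by
  classical
  have hmatch := hpop.1
  have hmem1 : (hsSC ⟨j, i⟩ : HouseSC n m S) ∈ (instSC n m S c).pref (aApp j l) :=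
    mem_s_prefA j l i
  have hlt1 : ((instSC n m S c).pref (aApp j l)).idxOf (hsSC ⟨j, i⟩) <
      ((instSC n m S c).pref (aApp j l)).idxOf hp := by
    rcases hbad with rfl | ⟨i', hlt, rfl⟩
    · rw [idx_s, idx_w]; have := i.2; omega
    · rw [idx_s, idx_s]; omega
  have hcapI : (instSC n m S c).cap (hsSC ⟨j, i⟩) = c (hsSC ⟨j, i⟩) := rfl
  rcases lt_or_ge (HA.matchedTo M (hsSC ⟨j, i⟩)).card (c (hsSC ⟨j, i⟩)) with hfree | hfull
  · exact no_free_slot hpop hMp hmem1 hlt1 (by rw [hcapI]; exact hfree)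
  · have hcard : 1 < (HA.matchedTo M (hsSC ⟨j, i⟩)).card := lt_of_lt_of_le hcap hfull
    obtain ⟨z, hz, hzt⟩ := Finset.exists_mem_ne hcard (Sum.inl ⟨j, i⟩)
    have hMz : M z = some (hsSC ⟨j, i⟩) := by
      simpa [HA.matchedTo] using hz
    have hpz : aApp j l ≠ z := by
      intro h
      rw [← h, hMp] at hMz
      injection hMz with h2
      rcases hbad with rfl | ⟨i', hlt, rfl⟩
      · exact absurd h2 (by simp [hwSC, hsSC])
      · have : i' = i := by simpa using hsSC_injective h2
        omega
    rcases accepts_s (hmatch.1 z _ hMz) with rfl | ⟨l', rfl⟩ | ⟨i'', hi'', rfl⟩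
    · exact hzt rfl
    · refine no_chain hpop hpz (by simp [aApp, yApp]) (by simp [aApp, yApp])
        hMp hMz (matched_y hperf hmatch l') hmem1 hlt1 ?_ ?_
      · rw [prefA]; exact List.mem_cons_self
      · rw [idx_s, prefA, List.idxOf_cons_self]; omega
    · refine no_chain hpop hpz (by simp [aApp, fApp]) (by simp [eApp, fApp])
        hMp hMz (matched_f hperf hmatch) hmem1 hlt1 ?_ ?_
      · rw [prefE]; exact List.mem_cons_self
      · rw [prefE, List.idxOf_cons_self, List.idxOf_cons_ne _ (by simp [hfSC, hsSC])]
        omega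

end Matched

end InstanceTools
/-- suppose every element belongs to at least one set, `d, k > 0`,
`d·k < n̂²`, and `r` is a capacity change vector with `|r|_∞ ≤ d·k` such that the
reduction instance with capacities `q + r` admits a perfect popular matching. Then the
family `J` of sets `S_j` such that some house `s_j^l` has increased capacity satisfies
`|J| ≤ d·k`, the sets in `J` cover at least `n̂ − d·k` elements, and consequently the
set cover instance admits a set cover using at most `2·d·k` sets. -/
theorem change_gives_setCover (n m d k : ℕ) (S : Fin m → Finset (Fin n))
    (hcover : ∀ i, ∃ j, i ∈ S j) (hd : 0 < d) (hk : 0 < k) (hdk : d * k < n ^ 2)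
    (r : HouseSC n m S → ℤ)
    (hfeas : ∀ h, 0 ≤ (capSC h : ℤ) + r h)
    (hinf : ∀ h, |r h| ≤ (d * k : ℤ))
    (hM : ∃ M, HA.Perfect M ∧
      (instSC n m S fun h => ((capSC h : ℤ) + r h).toNat).Popular M) :
    (Finset.univ.filter fun j : Fin m => ∃ l, 0 < r (hsSC ⟨j, l⟩)).card ≤ d * k ∧
    n - d * k ≤ (Finset.univ.filter fun i : Fin n =>
      ∃ j ∈ Finset.univ.filter fun j : Fin m => ∃ l, 0 < r (hsSC ⟨j, l⟩),
        i ∈ S j).card ∧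
    ∃ J' : Finset (Fin m), J'.card ≤ 2 * d * k ∧ ∀ i, ∃ j ∈ J', i ∈ S j := by

  classical
  obtain ⟨M, hperf, hpop⟩ := hM
  set c : HouseSC n m S → ℕ := fun h => ((capSC h : ℤ) + r h).toNat with hc
  have hmatch := hpop.1
  set J := (Finset.univ.filter fun j : Fin m => ∃ l, 0 < r (hsSC ⟨j, l⟩)) with hJ
  have habs : ∀ h0 : HouseSC n m S, -(d * k : ℤ) ≤ r h0 ∧ r h0 ≤ (d * k : ℤ) :=
    fun h0 => abs_le.1 (hinf h0)
  have hcap_s2 : ∀ (j : Fin m) (i : Fin (S j).card),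
      0 < r (hsSC ⟨j, i⟩) → 2 ≤ c (hsSC ⟨j, i⟩) := by
    intro j i h
    have h1 := habs (hsSC ⟨j, i⟩)
    have h2 : capSC (hsSC (S := S) ⟨j, i⟩) = 1 := rfl
    simp only [hc]
    rw [h2]
    omega
  have hslack : ∀ (j : Fin m) (i : Fin (S j).card),
      2 ≤ (HA.matchedTo M (hsSC ⟨j, i⟩)).card → 0 < r (hsSC ⟨j, i⟩) := by
    intro j i h2
    have h3 : (HA.matchedTo M (hsSC ⟨j, i⟩)).card ≤ c (hsSC ⟨j, i⟩) := hmatch.2 _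
    have h4 : capSC (hsSC (S := S) ⟨j, i⟩) = 1 := rfl
    simp only [hc] at h3
    rw [h4] at h3
    omega
  have hcap_s_le : ∀ (j : Fin m) (i : Fin (S j).card), c (hsSC ⟨j, i⟩) ≤ 1 + d * k := by
    intro j i
    have h1 := habs (hsSC ⟨j, i⟩)
    have h2 : capSC (hsSC (S := S) ⟨j, i⟩) = 1 := rfl
    simp only [hc]
    rw [h2]
    omega
  -- Part B : the sets in `J` cover all but at most `d·k` elements
  have hE : ∀ i : Fin n, M (eApp i) = some hfSC ∨ ∃ j, i ∈ S j ∧ j ∈ J := by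
    intro i
    obtain ⟨h, hh⟩ := Option.isSome_iff_exists.1 (hperf (eApp i))
    rcases memE_cases (hmatch.1 _ _ hh) with rfl | ⟨j, hij, i', rfl⟩
    · exact Or.inl hh
    · right
      refine ⟨j, hij, ?_⟩
      have ht : Sum.inl ⟨j, i'⟩ ∈ HA.matchedTo M (hsSC ⟨j, i'⟩) := by
        simp [HA.matchedTo, matched_t hperf hmatch]
      have he : eApp i ∈ HA.matchedTo M (hsSC ⟨j, i'⟩) := by
        simp [HA.matchedTo, hh]
      have hne : (eApp i : ApplSC n m S) ≠ Sum.inl ⟨j, i'⟩ := by simp [eApp]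
      have h2 : 2 ≤ (HA.matchedTo M (hsSC ⟨j, i'⟩)).card :=
        Finset.one_lt_card.2 ⟨_, he, _, ht, hne⟩
      have h3 := hslack j i' h2
      rw [hJ]
      simp only [Finset.mem_filter, Finset.mem_univ, true_and]
      exact ⟨i', h3⟩
  have hU : (Finset.univ.filter fun i : Fin n => ¬ ∃ j ∈ J, i ∈ S j).card ≤ d * k := by
    have hUf : ∀ i ∈ (Finset.univ.filter fun i : Fin n => ¬ ∃ j ∈ J, i ∈ S j),
        M (eApp i) = some hfSC := by
      intro i hi
      simp only [Finset.mem_filter, Finset.mem_univ, true_and] at hi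
      rcases hE i with h | ⟨j, hij, hjJ⟩
      · exact h
      · exact absurd ⟨j, hjJ, hij⟩ hi
    have hinj : (Finset.univ.filter fun i : Fin n => ¬ ∃ j ∈ J, i ∈ S j).card ≤
        ((HA.matchedTo M hfSC).erase fApp).card := by
      apply Finset.card_le_card_of_injOn (fun i => eApp i)
      · intro i hi
        exact Finset.mem_erase.2 ⟨by simp [eApp, fApp], by simp [HA.matchedTo, hUf i hi]⟩
      · intro a _ b _ hab
        simpa [eApp] using hab
    have hfmem : (fApp : ApplSC n m S) ∈ HA.matchedTo M hfSC := by
      simp [HA.matchedTo, matched_f hperf hmatch]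
    have hcf : (HA.matchedTo M hfSC).card ≤ c hfSC := hmatch.2 _
    have hcfle : c hfSC ≤ 1 + d * k := by
      have h1 := habs (hfSC (S := S))
      have h2 : capSC (hfSC (S := S)) = 1 := rfl
      simp only [hc]
      rw [h2]
      omega
    rw [Finset.card_erase_of_mem hfmem] at hinj
    have hpos : 0 < (HA.matchedTo M hfSC).card := Finset.card_pos.2 ⟨_, hfmem⟩
    omega
  have hgoal2 : n - d * k ≤ (Finset.univ.filter fun i : Fin n => ∃ j ∈ J, i ∈ S j).card := by
    have hsplit := Finset.card_filter_add_card_filter_not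
      (s := (Finset.univ : Finset (Fin n))) (p := fun i : Fin n => ∃ j ∈ J, i ∈ S j)
    rw [Finset.card_univ, Fintype.card_fin] at hsplit
    omega
  -- Part A : `|J| ≤ d·k`
  have hgoal1 : J.card ≤ d * k := by
    by_contra hJc
    push_neg at hJc
    have hBj : ∀ j ∈ J, n ^ 2 * m ≤
        (Finset.univ.filter fun l : Fin (n ^ 2 * m) =>
          M (aApp j l) = some (hxSC l)).card + d * k := by
      intro j hj
      rw [hJ] at hj
      simp only [Finset.mem_filter, Finset.mem_univ, true_and] at hj
      obtain ⟨isl, hisl⟩ := hj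
      have hcapsl : 2 ≤ c (hsSC ⟨j, isl⟩) := hcap_s2 j isl hisl
      have hsplit := Finset.card_filter_add_card_filter_not
        (s := (Finset.univ : Finset (Fin (n ^ 2 * m))))
        (p := fun l : Fin (n ^ 2 * m) => M (aApp j l) = some (hxSC l))
      rw [Finset.card_univ, Fintype.card_fin] at hsplit
      suffices hB : (Finset.univ.filter fun l : Fin (n ^ 2 * m) =>
          ¬ M (aApp j l) = some (hxSC l)).card ≤ d * k by omega
      set B := Finset.univ.filter fun l : Fin (n ^ 2 * m) =>
        ¬ M (aApp j l) = some (hxSC l) with hBdef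
      have hhouse : ∀ l ∈ B, ∃ i : Fin (S j).card, M (aApp j l) = some (hsSC ⟨j, i⟩) := by
        intro l hl
        simp only [hBdef, Finset.mem_filter, Finset.mem_univ, true_and] at hl
        obtain ⟨h, hh⟩ := Option.isSome_iff_exists.1 (hperf (aApp j l))
        rcases memA_cases (hmatch.1 _ _ hh) with rfl | ⟨i, rfl⟩ | rfl
        · exact absurd hh hl
        · exact ⟨i, hh⟩
        · exact absurd (key_F hperf hpop hcapsl hh (Or.inl rfl)) id
      rcases B.eq_empty_or_nonempty with hBe | ⟨l₀, hl₀⟩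
      · simp [hBe]
      obtain ⟨i₀, hi₀⟩ := hhouse l₀ hl₀
      have hsame : ∀ l ∈ B, M (aApp j l) = some (hsSC ⟨j, i₀⟩) := by
        intro l hl
        obtain ⟨i₁, hi₁⟩ := hhouse l hl
        rcases lt_trichotomy (i₁ : ℕ) (i₀ : ℕ) with hlt | heq | hgt
        · have ht : Sum.inl ⟨j, i₁⟩ ∈ HA.matchedTo M (hsSC ⟨j, i₁⟩) := by
            simp [HA.matchedTo, matched_t hperf hmatch]
          have ha : aApp j l ∈ HA.matchedTo M (hsSC ⟨j, i₁⟩) := by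
            simp [HA.matchedTo, hi₁]
          have h2 : 2 ≤ (HA.matchedTo M (hsSC ⟨j, i₁⟩)).card :=
            Finset.one_lt_card.2 ⟨_, ha, _, ht, by simp [aApp]⟩
          exact absurd (key_F hperf hpop (hcap_s2 j i₁ (hslack j i₁ h2)) hi₀
            (Or.inr ⟨i₀, hlt, rfl⟩)) id
        · have heq2 : i₁ = i₀ := Fin.ext heq
          rwa [heq2] at hi₁
        · have ht : Sum.inl ⟨j, i₀⟩ ∈ HA.matchedTo M (hsSC ⟨j, i₀⟩) := by
            simp [HA.matchedTo, matched_t hperf hmatch]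
          have ha : aApp j l₀ ∈ HA.matchedTo M (hsSC ⟨j, i₀⟩) := by
            simp [HA.matchedTo, hi₀]
          have h2 : 2 ≤ (HA.matchedTo M (hsSC ⟨j, i₀⟩)).card :=
            Finset.one_lt_card.2 ⟨_, ha, _, ht, by simp [aApp]⟩
          exact absurd (key_F hperf hpop (hcap_s2 j i₀ (hslack j i₀ h2)) hi₁
            (Or.inr ⟨i₁, hgt, rfl⟩)) id
      have hinj : B.card ≤ ((HA.matchedTo M (hsSC ⟨j, i₀⟩)).erase (Sum.inl ⟨j, i₀⟩)).card := by
        apply Finset.card_le_card_of_injOn (fun l => aApp j l)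
        · intro l hl
          exact Finset.mem_erase.2 ⟨by simp [aApp], by simp [HA.matchedTo, hsame l hl]⟩
        · intro a _ b _ hab
          simpa [aApp] using hab
      have htm : Sum.inl ⟨j, i₀⟩ ∈ HA.matchedTo M (hsSC ⟨j, i₀⟩) := by
        simp [HA.matchedTo, matched_t hperf hmatch]
      have hcm : (HA.matchedTo M (hsSC ⟨j, i₀⟩)).card ≤ c (hsSC ⟨j, i₀⟩) := hmatch.2 _
      have hcl : c (hsSC ⟨j, i₀⟩) ≤ 1 + d * k := hcap_s_le j i₀
      rw [Finset.card_erase_of_mem htm] at hinj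
      have hpos : 0 < (HA.matchedTo M (hsSC ⟨j, i₀⟩)).card := Finset.card_pos.2 ⟨_, htm⟩
      omega
    have hQl : ∀ l : Fin (n ^ 2 * m),
        (J.filter fun j => M (aApp j l) = some (hxSC l)).card ≤ d * k := by
      intro l
      have hinj : (J.filter fun j => M (aApp j l) = some (hxSC l)).card ≤
          ((HA.matchedTo M (hxSC l)).erase (yApp l)).card := by
        apply Finset.card_le_card_of_injOn (fun j => aApp j l)
        · intro j hjm
          simp only [Finset.mem_coe, Finset.mem_filter] at hjm
          exact Finset.mem_erase.2 ⟨by simp [aApp, yApp], by simp [HA.matchedTo, hjm.2]⟩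
        · intro a _ b _ hab
          simpa [aApp] using hab
      have hym : (yApp l : ApplSC n m S) ∈ HA.matchedTo M (hxSC l) := by
        simp [HA.matchedTo, matched_y hperf hmatch]
      have hcm : (HA.matchedTo M (hxSC l)).card ≤ c (hxSC l) := hmatch.2 _
      have hcl : c (hxSC l) ≤ 1 + d * k := by
        have h1 := habs (hxSC (S := S) l)
        have h2 : capSC (hxSC (S := S) l) = 1 := rfl
        simp only [hc]
        rw [h2]
        omega
      rw [Finset.card_erase_of_mem hym] at hinj
      have hpos : 0 < (HA.matchedTo M (hxSC l)).card := Finset.card_pos.2 ⟨_, hym⟩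
      omega
    have hswap : (∑ j ∈ J, (Finset.univ.filter fun l : Fin (n ^ 2 * m) =>
          M (aApp j l) = some (hxSC l)).card)
        = ∑ l : Fin (n ^ 2 * m), (J.filter fun j => M (aApp j l) = some (hxSC l)).card := by
      simp only [Finset.card_filter]
      exact Finset.sum_comm
    have h1 : J.card * (n ^ 2 * m) ≤ (∑ j ∈ J, (Finset.univ.filter fun l : Fin (n ^ 2 * m) =>
        M (aApp j l) = some (hxSC l)).card) + J.card * (d * k) := by
      calc J.card * (n ^ 2 * m) = ∑ _j ∈ J, n ^ 2 * m := by
            rw [Finset.sum_const, smul_eq_mul]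
        _ ≤ ∑ j ∈ J, ((Finset.univ.filter fun l : Fin (n ^ 2 * m) =>
              M (aApp j l) = some (hxSC l)).card + d * k) := Finset.sum_le_sum hBj
        _ = _ := by rw [Finset.sum_add_distrib, Finset.sum_const, smul_eq_mul]
    have h2 : (∑ j ∈ J, (Finset.univ.filter fun l : Fin (n ^ 2 * m) =>
        M (aApp j l) = some (hxSC l)).card) ≤ (n ^ 2 * m) * (d * k) := by
      rw [hswap]
      calc ∑ l : Fin (n ^ 2 * m), (J.filter fun j => M (aApp j l) = some (hxSC l)).card
          ≤ ∑ _l : Fin (n ^ 2 * m), d * k := Finset.sum_le_sum fun l _ => hQl l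
        _ = (n ^ 2 * m) * (d * k) := by
            rw [Finset.sum_const, Finset.card_univ, Fintype.card_fin, smul_eq_mul]
    have hJm : J.card ≤ m := by
      calc J.card ≤ (Finset.univ : Finset (Fin m)).card := Finset.card_le_card (by rw [hJ]; exact Finset.filter_subset _ _)
        _ = m := by rw [Finset.card_univ, Fintype.card_fin]
    have hdk1 : 1 ≤ d * k := Nat.mul_pos hd hk
    have h3 : (d * k + 1) * (n ^ 2 * m) ≤ J.card * (n ^ 2 * m) :=
      Nat.mul_le_mul_right _ (by omega)
    have h5 : n ^ 2 * m ≤ J.card * (d * k) := by nlinarith [h1, h2, h3]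
    have h6 : J.card * (d * k) ≤ m * (d * k) := Nat.mul_le_mul_right _ hJm
    have hm : 0 < m := by omega
    have h7 : m * (d * k) < m * n ^ 2 := mul_lt_mul_of_pos_left hdk hm
    have h8 : m * n ^ 2 = n ^ 2 * m := Nat.mul_comm _ _
    omega
  -- Part C : assemble
  choose g hg using hcover
  refine ⟨hgoal1, ?_, ⟨J ∪ (Finset.univ.filter fun i : Fin n =>
    ¬ ∃ j ∈ J, i ∈ S j).image g, ?_, ?_⟩⟩
  · convert hgoal2 using 2
  · calc (J ∪ (Finset.univ.filter fun i : Fin n => ¬ ∃ j ∈ J, i ∈ S j).image g).card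
        ≤ J.card + ((Finset.univ.filter fun i : Fin n => ¬ ∃ j ∈ J, i ∈ S j).image g).card :=
          Finset.card_union_le _ _
      _ ≤ d * k + d * k := add_le_add hgoal1 (le_trans (Finset.card_image_le) hU)
      _ = 2 * d * k := by ring
  · intro i
    by_cases hcovd : ∃ j ∈ J, i ∈ S j
    · obtain ⟨j, hjJ, hij⟩ := hcovd
      exact ⟨j, Finset.mem_union_left _ hjJ, hij⟩
    · refine ⟨g i, Finset.mem_union_right _ (Finset.mem_image_of_mem g ?_), hg i⟩
      simp only [Finset.mem_filter, Finset.mem_univ, true_and]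
      exact hcovd
end
end
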